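/- arXiv:0708.2626 — 5 statements merged into one kernel-verified Lean document; each statement's English description precedes it below -/
import Mathlib

section
/- Let (V, ω) be a symplectic vector space, L ⊆ V a Lagrangian subspace, and I = I_S^{(L)} ⊗ Λ(V*) + S(V) ⊗ I_Λ as above. Then the contracting homotopy δ⁻¹ preserves I: δ⁻¹(I) ⊆ I. -/
open ExteriorAlgebra TensorProduct

/-- The symmetry relation on the tensor algebra: `x ⊗ y ~ y ⊗ x` for `x, y ∈ V`. -/
def symRel (k V : Type*) [Field k] [AddCommGroup V] [Module k V] :
    TensorAlgebra k V → TensorAlgebra k V → Prop := fun a b =>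
  ∃ x y : V, a = TensorAlgebra.ι k x * TensorAlgebra.ι k y ∧
    b = TensorAlgebra.ι k y * TensorAlgebra.ι k x

/-- The symmetric algebra `S(V)`, realized as the quotient of the tensor algebra
by the symmetry relation. -/
def KoszulSymAlg (k V : Type*) [Field k] [AddCommGroup V] [Module k V] : Type _ :=
  RingQuot (symRel k V)

noncomputable instance (k V : Type*) [Field k] [AddCommGroup V] [Module k V] :
    Ring (KoszulSymAlg k V) := inferInstanceAs (Ring (RingQuot (symRel k V)))

noncomputable instance (k V : Type*) [Field k] [AddCommGroup V] [Module k V] :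
    Algebra k (KoszulSymAlg k V) := inferInstanceAs (Algebra k (RingQuot (symRel k V)))

/-- The canonical linear embedding `V → S(V)`. -/
noncomputable def symι (k V : Type*) [Field k] [AddCommGroup V] [Module k V] :
    V →ₗ[k] KoszulSymAlg k V :=
  (RingQuot.mkAlgHom k (symRel k V)).toLinearMap.comp (TensorAlgebra.ι k)

variable (k V : Type*) [Field k] [AddCommGroup V] [Module k V]

/-- The symmetric monomial `x₁ ⊙ ⋯ ⊙ x_m ∈ S(V)`. -/
noncomputable def symMon {m : ℕ} (x : Fin m → V) : KoszulSymAlg k V :=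
  (List.ofFn fun i => symι k V (x i)).prod

/-- The exterior monomial `y₁ ∧ ⋯ ∧ y_n ∈ Λ(V*)`. -/
noncomputable def extMon {n : ℕ} (y : Fin n → Module.Dual k V) :
    ExteriorAlgebra k (Module.Dual k V) :=
  (List.ofFn fun j => ExteriorAlgebra.ι k (y j)).prod

/-- The ideal `I_S^{(L)}` of `S(V)` generated by the subspace `L`, as a `k`-submodule. -/
noncomputable def symIdealOf (L : Submodule k V) : Submodule k (KoszulSymAlg k V) :=
  Submodule.span k {s | ∃ p : KoszulSymAlg k V, ∃ x ∈ L, s = p * symι k V x}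

/-- The ideal `I_Λ` of `Λ(V*)` generated by `u(L)`, as a `k`-submodule, where
`u x = ω(x, ·)`. -/
noncomputable def extIdealOf (ω : V →ₗ[k] V →ₗ[k] k) (L : Submodule k V) :
    Submodule k (ExteriorAlgebra k (Module.Dual k V)) :=
  Submodule.span k {t | ∃ x ∈ L, ∃ a b : ExteriorAlgebra k (Module.Dual k V),
    t = a * ExteriorAlgebra.ι k (ω x) * b}

/-- The submodule `I = I_S^{(L)} ⊗ Λ(V*) + S(V) ⊗ I_Λ` of `S(V) ⊗ Λ(V*)`. -/
noncomputable def lagrangianIdeal (ω : V →ₗ[k] V →ₗ[k] k) (L : Submodule k V) :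
    Submodule k (KoszulSymAlg k V ⊗[k] ExteriorAlgebra k (Module.Dual k V)) :=
  Submodule.span k
    ({z | ∃ p ∈ symIdealOf k V L, ∃ η : ExteriorAlgebra k (Module.Dual k V),
        z = p ⊗ₜ[k] η} ∪
     {z | ∃ q : KoszulSymAlg k V, ∃ α ∈ extIdealOf k V ω L, z = q ⊗ₜ[k] α})

section Helpers
set_option synthInstance.maxHeartbeats 1000000
set_option maxHeartbeats 1000000

/-- The quotient map `T(V) → S(V)`, typed with codomain `KoszulSymAlg k V`. -/
noncomputable def symMk : TensorAlgebra k V →ₐ[k] KoszulSymAlg k V :=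
  RingQuot.mkAlgHom k (symRel k V)

lemma symMk_surjective (b : KoszulSymAlg k V) : ∃ B : TensorAlgebra k V, symMk k V B = b :=
  RingQuot.mkAlgHom_surjective k (symRel k V) b

/-- Product of `symι` images over a list. -/
noncomputable def symList (l : List V) : KoszulSymAlg k V :=
  (l.map (symι k V)).prod

/-- Product of `ExteriorAlgebra.ι` images over a list. -/
noncomputable def extList (l : List (Module.Dual k V)) :
    ExteriorAlgebra k (Module.Dual k V) :=
  (l.map (ExteriorAlgebra.ι k)).prod

lemma symList_nil : symList k V [] = 1 := rfl

lemma symList_cons (v : V) (l : List V) :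
    symList k V (v :: l) = symι k V v * symList k V l := by
  simp [symList]

lemma symList_append (l1 l2 : List V) :
    symList k V (l1 ++ l2) = symList k V l1 * symList k V l2 := by
  simp [symList]

lemma extList_nil : extList k V [] = 1 := rfl

lemma extList_cons (v : Module.Dual k V) (l : List (Module.Dual k V)) :
    extList k V (v :: l) = ExteriorAlgebra.ι k v * extList k V l := by
  simp [extList]

lemma extList_append (l1 l2 : List (Module.Dual k V)) :
    extList k V (l1 ++ l2) = extList k V l1 * extList k V l2 := by
  simp [extList]

lemma symMon_eq_symList {m : ℕ} (x : Fin m → V) :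
    symMon k V x = symList k V (List.ofFn x) := by
  simp [symMon, symList, List.map_ofFn, Function.comp_def]

lemma extMon_eq_extList {n : ℕ} (y : Fin n → Module.Dual k V) :
    extMon k V y = extList k V (List.ofFn y) := by
  simp [extMon, extList, List.map_ofFn, Function.comp_def]

lemma symι_eq (x : V) :
    symι k V x = RingQuot.mkAlgHom k (symRel k V) (TensorAlgebra.ι k x) := rfl

lemma symComm_ι (x : V) (b : KoszulSymAlg k V) :
    symι k V x * b = b * symι k V x := by
  obtain ⟨B, rfl⟩ := symMk_surjective k V b
  induction B using TensorAlgebra.induction with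
  | algebraMap r =>
      rw [AlgHom.commutes]
      exact (Algebra.commutes r _).symm
  | ι y =>
      have hrel : symRel k V (TensorAlgebra.ι k x * TensorAlgebra.ι k y)
          (TensorAlgebra.ι k y * TensorAlgebra.ι k x) := ⟨x, y, rfl, rfl⟩
      have h := RingQuot.mkAlgHom_rel k hrel
      rw [map_mul, map_mul] at h
      exact h
  | mul a b ha hb =>
      rw [map_mul, ← mul_assoc, ha, mul_assoc, hb, mul_assoc]
  | add a b ha hb =>
      rw [map_add, mul_add, add_mul, ha, hb]

lemma symComm (a b : KoszulSymAlg k V) : a * b = b * a := by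
  obtain ⟨A, rfl⟩ := symMk_surjective k V a
  induction A using TensorAlgebra.induction with
  | algebraMap r => rw [AlgHom.commutes]; exact Algebra.commutes r _
  | ι y => exact symComm_ι k V y b
  | mul c d hc hd =>
      rw [map_mul, mul_assoc, hd, ← mul_assoc, hc, mul_assoc]
  | add c d hc hd => rw [map_add, add_mul, mul_add, hc, hd]

/-- The set of symmetric monomials. -/
def symMonSet : Set (KoszulSymAlg k V) := {s | ∃ l : List V, s = symList k V l}

/-- The set of exterior monomials. -/
def extMonSet : Set (ExteriorAlgebra k (Module.Dual k V)) :=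
  {s | ∃ l : List (Module.Dual k V), s = extList k V l}

lemma mem_span_symMonSet (a : KoszulSymAlg k V) :
    a ∈ Submodule.span k (symMonSet k V) := by
  obtain ⟨A, rfl⟩ := symMk_surjective k V a
  induction A using TensorAlgebra.induction with
  | algebraMap r =>
      rw [AlgHom.commutes, Algebra.algebraMap_eq_smul_one]
      exact Submodule.smul_mem _ _ (Submodule.subset_span ⟨[], rfl⟩)
  | ι x =>
      exact Submodule.subset_span ⟨[x], by rw [symList, List.map_singleton, List.prod_singleton]; rfl⟩
  | mul a b ha hb =>
      rw [map_mul]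
      have h := Submodule.mul_mem_mul ha hb
      rw [Submodule.span_mul_span] at h
      refine Submodule.span_le.2 ?_ h
      rintro z ⟨s, ⟨l1, rfl⟩, t, ⟨l2, rfl⟩, rfl⟩
      exact Submodule.subset_span ⟨l1 ++ l2, (symList_append k V l1 l2).symm⟩
  | add a b ha hb => rw [map_add]; exact Submodule.add_mem _ ha hb

lemma mem_span_extMonSet (a : ExteriorAlgebra k (Module.Dual k V)) :
    a ∈ Submodule.span k (extMonSet k V) := by
  induction a using ExteriorAlgebra.induction with
  | algebraMap r =>
      rw [Algebra.algebraMap_eq_smul_one]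
      exact Submodule.smul_mem _ _ (Submodule.subset_span ⟨[], rfl⟩)
  | ι x =>
      exact Submodule.subset_span ⟨[x], by simp [extList]⟩
  | mul a b ha hb =>
      have h := Submodule.mul_mem_mul ha hb
      rw [Submodule.span_mul_span] at h
      refine Submodule.span_le.2 ?_ h
      rintro z ⟨s, ⟨l1, rfl⟩, t, ⟨l2, rfl⟩, rfl⟩
      exact Submodule.subset_span ⟨l1 ++ l2, (extList_append k V l1 l2).symm⟩
  | add a b ha hb => exact Submodule.add_mem _ ha hb

end Helpers
section Helpers2
set_option synthInstance.maxHeartbeats 1000000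
set_option maxHeartbeats 1000000

lemma symIdealOf_mul_left (L : Submodule k V) (c : KoszulSymAlg k V)
    {s : KoszulSymAlg k V} (hs : s ∈ symIdealOf k V L) :
    c * s ∈ symIdealOf k V L := by
  induction hs using Submodule.span_induction with
  | mem z hz =>
      obtain ⟨p, x, hx, rfl⟩ := hz
      exact Submodule.subset_span ⟨c * p, x, hx, (mul_assoc _ _ _).symm⟩
  | zero => rw [mul_zero]; exact Submodule.zero_mem _
  | add a b ha hb iha ihb => rw [mul_add]; exact Submodule.add_mem _ iha ihb
  | smul r a ha iha => rw [mul_smul_comm]; exact Submodule.smul_mem _ _ iha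

lemma extIdealOf_mul_left (ω : V →ₗ[k] V →ₗ[k] k) (L : Submodule k V)
    (c : ExteriorAlgebra k (Module.Dual k V))
    {s : ExteriorAlgebra k (Module.Dual k V)} (hs : s ∈ extIdealOf k V ω L) :
    c * s ∈ extIdealOf k V ω L := by
  induction hs using Submodule.span_induction with
  | mem z hz =>
      obtain ⟨x, hx, a, b, rfl⟩ := hz
      refine Submodule.subset_span ⟨x, hx, c * a, b, ?_⟩
      rw [mul_assoc c a, ← mul_assoc c, ← mul_assoc]
  | zero => rw [mul_zero]; exact Submodule.zero_mem _
  | add a b ha hb iha ihb => rw [mul_add]; exact Submodule.add_mem _ iha ihb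
  | smul r a ha iha => rw [mul_smul_comm]; exact Submodule.smul_mem _ _ iha

lemma symList_mem_ideal (L : Submodule k V) :
    ∀ l : List V, (∃ v ∈ l, v ∈ L) → symList k V l ∈ symIdealOf k V L := by
  intro l
  induction l with
  | nil => rintro ⟨v, hv, -⟩; exact absurd hv (List.not_mem_nil)
  | cons b t ih =>
      rintro ⟨v, hv, hvL⟩
      rw [symList_cons]
      rcases List.mem_cons.1 hv with rfl | hvt
      · rw [symComm]
        exact Submodule.subset_span ⟨symList k V t, v, hvL, rfl⟩
      · exact symIdealOf_mul_left k V L _ (ih ⟨v, hvt, hvL⟩)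

lemma extList_mem_ideal (ω : V →ₗ[k] V →ₗ[k] k) (L : Submodule k V) :
    ∀ l : List (Module.Dual k V), (∃ e ∈ l, ∃ v ∈ L, e = ω v) →
      extList k V l ∈ extIdealOf k V ω L := by
  intro l
  induction l with
  | nil => rintro ⟨e, he, -⟩; exact absurd he (List.not_mem_nil)
  | cons b t ih =>
      rintro ⟨e, he, v, hvL, hev⟩
      rw [extList_cons]
      rcases List.mem_cons.1 he with rfl | het
      · refine Submodule.subset_span ⟨v, hvL, 1, extList k V t, ?_⟩
        rw [hev, one_mul]
      · exact extIdealOf_mul_left k V ω L _ (ih ⟨e, het, v, hvL, hev⟩)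

lemma eraseIdx_map {α β : Type*} (f : α → β) :
    ∀ (l : List α) (i : ℕ), (l.map f).eraseIdx i = (l.eraseIdx i).map f := by
  intro l
  induction l with
  | nil => intro i; simp
  | cons b t ih =>
      intro i
      cases i with
      | zero => simp
      | succ j => simp [ih j]

lemma getElem_append_middle {α : Type*} :
    ∀ (l1 : List α) (x : α) (l2 : List α) (h : l1.length < (l1 ++ x :: l2).length),
      (l1 ++ x :: l2)[l1.length] = x := by
  intro l1
  induction l1 with
  | nil => intro x l2 h; simp
  | cons b t ih => intro x l2 h; simpa using ih x l2 (by simp)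

end Helpers2
section Helpers3
set_option synthInstance.maxHeartbeats 1000000
set_option maxHeartbeats 1000000

/-- Good monomials: pure tensors of monomials with a factor witnessing ideal membership. -/
def goodSet (ω : V →ₗ[k] V →ₗ[k] k) (L : Submodule k V) :
    Set (KoszulSymAlg k V ⊗[k] ExteriorAlgebra k (Module.Dual k V)) :=
  {z | ∃ (m n : ℕ) (x : Fin m → V) (y : Fin n → Module.Dual k V),
    z = symMon k V x ⊗ₜ[k] extMon k V y ∧
      ((∃ i, x i ∈ L) ∨ ∃ j, ∃ v ∈ L, y j = ω v)}

lemma symList_tmul_mem_span_good (ω : V →ₗ[k] V →ₗ[k] k) (L : Submodule k V)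
    (l : List V) (hl : ∃ v ∈ l, v ∈ L) (η : ExteriorAlgebra k (Module.Dual k V)) :
    symList k V l ⊗ₜ[k] η ∈ Submodule.span k (goodSet k V ω L) := by
  induction mem_span_extMonSet k V η using Submodule.span_induction with
  | mem z hz =>
      obtain ⟨l2, rfl⟩ := hz
      obtain ⟨v, hv, hvL⟩ := hl
      obtain ⟨i, hi, hiv⟩ := List.getElem_of_mem hv
      refine Submodule.subset_span
        ⟨l.length, l2.length, fun i => l.get i, fun j => l2.get j, ?_, Or.inl ⟨⟨i, hi⟩, ?_⟩⟩
      · rw [symMon_eq_symList, extMon_eq_extList, List.ofFn_get, List.ofFn_get]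
      · simpa [hiv] using hvL
  | zero => rw [TensorProduct.tmul_zero]; exact Submodule.zero_mem _
  | add a b ha hb iha ihb => rw [TensorProduct.tmul_add]; exact Submodule.add_mem _ iha ihb
  | smul r a ha iha => rw [TensorProduct.tmul_smul]; exact Submodule.smul_mem _ _ iha

lemma tmul_extList_mem_span_good (ω : V →ₗ[k] V →ₗ[k] k) (L : Submodule k V)
    (q : KoszulSymAlg k V) (l : List (Module.Dual k V))
    (hl : ∃ e ∈ l, ∃ v ∈ L, e = ω v) :
    q ⊗ₜ[k] extList k V l ∈ Submodule.span k (goodSet k V ω L) := by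
  induction mem_span_symMonSet k V q using Submodule.span_induction with
  | mem z hz =>
      obtain ⟨l1, rfl⟩ := hz
      obtain ⟨e, he, v, hvL, hev⟩ := hl
      obtain ⟨i, hi, hie⟩ := List.getElem_of_mem he
      refine Submodule.subset_span
        ⟨l1.length, l.length, fun i => l1.get i, fun j => l.get j, ?_,
          Or.inr ⟨⟨i, hi⟩, v, hvL, ?_⟩⟩
      · rw [symMon_eq_symList, extMon_eq_extList, List.ofFn_get, List.ofFn_get]
      · simpa [hie] using hev
  | zero => rw [TensorProduct.zero_tmul]; exact Submodule.zero_mem _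
  | add a b ha hb iha ihb => rw [TensorProduct.add_tmul]; exact Submodule.add_mem _ iha ihb
  | smul r a ha iha =>
      rw [← TensorProduct.smul_tmul']; exact Submodule.smul_mem _ _ iha

lemma lagrangianIdeal_le_span_good (ω : V →ₗ[k] V →ₗ[k] k) (L : Submodule k V) :
    lagrangianIdeal k V ω L ≤ Submodule.span k (goodSet k V ω L) := by
  rw [lagrangianIdeal]
  refine Submodule.span_le.2 ?_
  rintro z (⟨p, hp, η, rfl⟩ | ⟨q, α, hα, rfl⟩)
  · -- p ∈ I_S
    induction hp using Submodule.span_induction with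
    | mem s hs =>
        obtain ⟨q, x, hxL, rfl⟩ := hs
        -- q * symι x ⊗ η, decompose q into monomials
        induction mem_span_symMonSet k V q using Submodule.span_induction with
        | mem w hw =>
            obtain ⟨l, rfl⟩ := hw
            rw [show symList k V l * symι k V x = symList k V (l ++ [x]) by
              rw [symList_append, symList_cons, symList_nil, mul_one]]
            exact symList_tmul_mem_span_good k V ω L _ ⟨x, by simp, hxL⟩ η
        | zero =>
            rw [zero_mul, TensorProduct.zero_tmul]; exact Submodule.zero_mem _
        | add a b ha hb iha ihb =>
            rw [add_mul, TensorProduct.add_tmul]; exact Submodule.add_mem _ iha ihb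
        | smul r a ha iha =>
            rw [smul_mul_assoc, ← TensorProduct.smul_tmul']
            exact Submodule.smul_mem _ _ iha
    | zero => rw [TensorProduct.zero_tmul]; exact Submodule.zero_mem _
    | add a b ha hb iha ihb =>
        rw [TensorProduct.add_tmul]; exact Submodule.add_mem _ iha ihb
    | smul r a ha iha =>
        rw [← TensorProduct.smul_tmul']; exact Submodule.smul_mem _ _ iha
  · -- α ∈ I_Λ
    induction hα using Submodule.span_induction with
    | mem s hs =>
        obtain ⟨x, hxL, a, b, rfl⟩ := hs
        induction mem_span_extMonSet k V a using Submodule.span_induction with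
        | mem w hw =>
            obtain ⟨l1, rfl⟩ := hw
            induction mem_span_extMonSet k V b using Submodule.span_induction with
            | mem w2 hw2 =>
                obtain ⟨l2, rfl⟩ := hw2
                rw [show extList k V l1 * ExteriorAlgebra.ι k (ω x) * extList k V l2 =
                    extList k V (l1 ++ (ω x) :: l2) by
                  rw [extList_append, extList_cons, mul_assoc]]
                exact tmul_extList_mem_span_good k V ω L q _ ⟨ω x, by simp, x, hxL, rfl⟩
            | zero =>
                rw [mul_zero, TensorProduct.tmul_zero]; exact Submodule.zero_mem _
            | add c d hc hd ihc ihd =>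
                rw [mul_add, TensorProduct.tmul_add]; exact Submodule.add_mem _ ihc ihd
            | smul r c hc ihc =>
                rw [mul_smul_comm, TensorProduct.tmul_smul]
                exact Submodule.smul_mem _ _ ihc
        | zero =>
            rw [zero_mul, zero_mul, TensorProduct.tmul_zero]; exact Submodule.zero_mem _
        | add c d hc hd ihc ihd =>
            rw [add_mul, add_mul, TensorProduct.tmul_add]; exact Submodule.add_mem _ ihc ihd
        | smul r c hc ihc =>
            rw [smul_mul_assoc, smul_mul_assoc, TensorProduct.tmul_smul]
            exact Submodule.smul_mem _ _ ihc
    | zero => rw [TensorProduct.tmul_zero]; exact Submodule.zero_mem _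
    | add a b ha hb iha ihb =>
        rw [TensorProduct.tmul_add]; exact Submodule.add_mem _ iha ihb
    | smul r a ha iha =>
        rw [TensorProduct.tmul_smul]; exact Submodule.smul_mem _ _ iha

end Helpers3
section Helpers4
set_option synthInstance.maxHeartbeats 1000000
set_option maxHeartbeats 1000000

lemma term_mem_lagrangianIdeal (ω : V →ₗ[k] V →ₗ[k] k)
    (u : V ≃ₗ[k] Module.Dual k V) (hu : ∀ x y : V, u x y = ω x y)
    (L : Submodule k V) {m n : ℕ} (x : Fin m → V) (y : Fin n → Module.Dual k V)
    (hgood : (∃ i, x i ∈ L) ∨ ∃ j, ∃ v ∈ L, y j = ω v) (j : Fin n) :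
    (symι k V (u.symm (y j)) * symMon k V x) ⊗ₜ[k]
        ((List.ofFn fun j' => ExteriorAlgebra.ι k (y j')).eraseIdx j).prod ∈
      lagrangianIdeal k V ω L := by
  have hsym : ∀ w : V, symι k V w * symMon k V x = symList k V (w :: List.ofFn x) := by
    intro w
    rw [symMon_eq_symList, symList_cons]
  rcases hgood with ⟨i, hiL⟩ | ⟨j0, v, hvL, hy⟩
  · -- a symmetric factor lies in L
    refine Submodule.subset_span (Or.inl ⟨_, ?_, _, rfl⟩)
    rw [hsym]
    exact symList_mem_ideal k V L _ ⟨x i, by simp [List.mem_ofFn], hiL⟩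
  · by_cases hj : j = j0
    · -- erased index is the good one; then u.symm (y j) = v ∈ L
      subst hj
      have huv : u v = ω v := LinearMap.ext (hu v)
      have hsymm : u.symm (y j) = v := by rw [hy, ← huv, u.symm_apply_apply]
      refine Submodule.subset_span (Or.inl ⟨_, ?_, _, rfl⟩)
      rw [hsymm, hsym]
      exact symList_mem_ideal k V L _ ⟨v, by simp, hvL⟩
    · -- the good exterior factor survives the erasure
      have hofn : (List.ofFn fun j' => ExteriorAlgebra.ι k (y j')) =
          (List.ofFn y).map (ExteriorAlgebra.ι k) := by
        rw [List.map_ofFn]; rfl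
      have herase : ((List.ofFn fun j' => ExteriorAlgebra.ι k (y j')).eraseIdx j).prod =
          extList k V ((List.ofFn y).eraseIdx j) := by
        rw [hofn, eraseIdx_map]; rfl
      refine Submodule.subset_span (Or.inr ⟨_, _, ?_, rfl⟩)
      rw [herase]
      refine extList_mem_ideal k V ω L _ ⟨y j0, ?_, v, hvL, hy⟩
      rw [List.mem_eraseIdx_iff_getElem]
      exact ⟨j0, by simp, by simpa using Fin.val_ne_of_ne (Ne.symm hj), by simp⟩

end Helpers4
set_option synthInstance.maxHeartbeats 1000000
set_option maxHeartbeats 1000000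
/-- the contracting homotopy `δ⁻¹` preserves the submodule
`I = I_S^{(L)} ⊗ Λ(V*) + S(V) ⊗ I_Λ` associated with a Lagrangian subspace `L`. -/
theorem contracting_homotopy_preserves_lagrangian_ideal
    [CharZero k] [FiniteDimensional k V]
    (ω : V →ₗ[k] V →ₗ[k] k) (halt : ∀ x : V, ω x x = 0)
    (hnondeg : ∀ x : V, (∀ y : V, ω x y = 0) → x = 0)
    (u : V ≃ₗ[k] Module.Dual k V) (hu : ∀ x y : V, u x y = ω x y)
    (L : Submodule k V)
    (hLag : ∀ x ∈ L, ∀ y ∈ L, ω x y = 0)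
    (hdim : 2 * Module.finrank k L = Module.finrank k V)
    (δinv : (KoszulSymAlg k V ⊗[k] ExteriorAlgebra k (Module.Dual k V)) →ₗ[k]
      (KoszulSymAlg k V ⊗[k] ExteriorAlgebra k (Module.Dual k V)))
    (hδinv : ∀ (m n : ℕ) (x : Fin m → V) (y : Fin n → Module.Dual k V),
      δinv (symMon k V x ⊗ₜ[k] extMon k V y) =
        (((m + n : ℕ) : k))⁻¹ •
          ∑ j : Fin n, ((-1 : k) ^ (j : ℕ)) •
            ((symι k V (u.symm (y j)) * symMon k V x) ⊗ₜ[k]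
              ((List.ofFn fun j' => ExteriorAlgebra.ι k (y j')).eraseIdx j).prod)) :
    ∀ a ∈ lagrangianIdeal k V ω L, δinv a ∈ lagrangianIdeal k V ω L := by
  intro a ha
  have hspan : a ∈ Submodule.span k (goodSet k V ω L) :=
    lagrangianIdeal_le_span_good k V ω L ha
  have hkey : Submodule.span k (goodSet k V ω L) ≤
      (lagrangianIdeal k V ω L).comap δinv := by
    refine Submodule.span_le.2 ?_
    rintro z ⟨m, n, x, y, rfl, hgood⟩
    simp only [Submodule.mem_comap, SetLike.mem_coe]
    rw [hδinv]
    refine Submodule.smul_mem _ _ (Submodule.sum_mem _ fun j _ => Submodule.smul_mem _ _ ?_)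
    exact term_mem_lagrangianIdeal k V ω u hu L x y hgood j
  exact hkey hspan
end

section
/- In the setting of the PBW theorem for the Weyl algebra: let S̃(V) ⊆ T(V) be the A-submodule spanned by {e_I : I ∈ Υ₀} (ordered monomials in a symplectic basis adapted to a Lagrangian splitting). Then T(V) decomposes as a direct sum of A-modules: T(V) = S̃(V) ⊕ I_W, where I_W is the two-sided ideal generated by the Weyl relations x⊗y − y⊗x − λω(x,y). -/
/-- The Weyl relation on the tensor algebra `T(V)`:
`x ⊗ y − y ⊗ x ~ λ ω(x,y)` for `x, y ∈ V`. -/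
def weylRel (A V : Type*) [CommRing A] [AddCommGroup V] [Module A V]
    (ω : V →ₗ[A] V →ₗ[A] A) (lam : A) :
    TensorAlgebra A V → TensorAlgebra A V → Prop := fun a b =>
  ∃ x y : V,
    a = TensorAlgebra.ι A x * TensorAlgebra.ι A y -
        TensorAlgebra.ι A y * TensorAlgebra.ι A x ∧
    b = algebraMap A (TensorAlgebra A V) (lam * ω x y)

/-- The Weyl algebra `W(V) = T(V)/I_W`. -/
def WeylAlgebra (A V : Type*) [CommRing A] [AddCommGroup V] [Module A V]
    (ω : V →ₗ[A] V →ₗ[A] A) (lam : A) : Type _ :=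
  RingQuot (weylRel A V ω lam)

noncomputable instance (A V : Type*) [CommRing A] [AddCommGroup V] [Module A V]
    (ω : V →ₗ[A] V →ₗ[A] A) (lam : A) : Ring (WeylAlgebra A V ω lam) :=
  inferInstanceAs (Ring (RingQuot (weylRel A V ω lam)))

noncomputable instance (A V : Type*) [CommRing A] [AddCommGroup V] [Module A V]
    (ω : V →ₗ[A] V →ₗ[A] A) (lam : A) : Algebra A (WeylAlgebra A V ω lam) :=
  inferInstanceAs (Algebra A (RingQuot (weylRel A V ω lam)))

/-- The canonical projection `μ_W : T(V) → W(V)` as an `A`-linear map. -/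
noncomputable def muW (A V : Type*) [CommRing A] [AddCommGroup V] [Module A V]
    (ω : V →ₗ[A] V →ₗ[A] A) (lam : A) :
    TensorAlgebra A V →ₗ[A] WeylAlgebra A V ω lam :=
  (RingQuot.mkAlgHom A (weylRel A V ω lam)).toLinearMap

/-- The symmetry relation on the tensor algebra. -/
def symCRel (A V : Type*) [CommRing A] [AddCommGroup V] [Module A V] :
    TensorAlgebra A V → TensorAlgebra A V → Prop := fun a b =>
  ∃ x y : V, a = TensorAlgebra.ι A x * TensorAlgebra.ι A y ∧
    b = TensorAlgebra.ι A y * TensorAlgebra.ι A x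

/-- The symmetric algebra `S(V) = T(V)/I_S`, realized as the quotient of the tensor
algebra by the symmetry relation. -/
def SymCAlg (A V : Type*) [CommRing A] [AddCommGroup V] [Module A V] : Type _ :=
  RingQuot (symCRel A V)

noncomputable instance (A V : Type*) [CommRing A] [AddCommGroup V] [Module A V] :
    Ring (SymCAlg A V) := inferInstanceAs (Ring (RingQuot (symCRel A V)))

noncomputable instance (A V : Type*) [CommRing A] [AddCommGroup V] [Module A V] :
    Algebra A (SymCAlg A V) := inferInstanceAs (Algebra A (RingQuot (symCRel A V)))

/-- The canonical projection `μ_S : T(V) → S(V)` as an `A`-linear map. -/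
noncomputable def muS (A V : Type*) [CommRing A] [AddCommGroup V] [Module A V] :
    TensorAlgebra A V →ₗ[A] SymCAlg A V :=
  (RingQuot.mkAlgHom A (symCRel A V)).toLinearMap

/-- The set `Υ₀` of nonincreasing index sequences in `{0, ..., 2ν-1}`. -/
def NonincSeq (ν : ℕ) : Type :=
  {l : List (Fin (2 * ν)) // List.Pairwise (fun a b => b ≤ a) l}

/-- The ordered tensor monomial `e_I = e_{i₁} ⊗ ⋯ ⊗ e_{i_p} ∈ T(V)`. -/
noncomputable def tensorMon (A V : Type*) [CommRing A] [AddCommGroup V] [Module A V]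
    {ν : ℕ} (e : Fin (2 * ν) → V) (l : List (Fin (2 * ν))) : TensorAlgebra A V :=
  (l.map fun i => TensorAlgebra.ι A (e i)).prod

/-- The submodule `S̃(V) ⊆ T(V)` spanned by the ordered monomials `e_I`, `I ∈ Υ₀`. -/
noncomputable def orderedMonSpan (A V : Type*) [CommRing A] [AddCommGroup V] [Module A V]
    {ν : ℕ} (e : Fin (2 * ν) → V) : Submodule A (TensorAlgebra A V) :=
  Submodule.span A
    {z | ∃ l : List (Fin (2 * ν)), List.Pairwise (fun a b => b ≤ a) l ∧
      z = tensorMon A V e l}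

/-- The two-sided ideal `I_W ⊆ T(V)` generated by the Weyl relations
`x ⊗ y − y ⊗ x − λ ω(x,y)`, as an `A`-submodule. -/
noncomputable def weylIdeal (A V : Type*) [CommRing A] [AddCommGroup V] [Module A V]
    (ω : V →ₗ[A] V →ₗ[A] A) (lam : A) : Submodule A (TensorAlgebra A V) :=
  Submodule.span A
    {z | ∃ (a b : TensorAlgebra A V) (x y : V),
      z = a * (TensorAlgebra.ι A x * TensorAlgebra.ι A y -
        TensorAlgebra.ι A y * TensorAlgebra.ι A x -
        algebraMap A (TensorAlgebra A V) (lam * ω x y)) * b}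

open Finsupp TensorAlgebra
namespace PBWAux
variable {A : Type*} [CommRing A] {n : ℕ}
def HB (l : List (Fin n)) (b : Fin n) : Prop := ∀ h ∈ l.head?, h ≤ b
lemma hb_nil (b : Fin n) : HB ([] : List (Fin n)) b := by simp [HB]
lemma hb_cons {j b : Fin n} {t : List (Fin n)} : HB (j :: t) b ↔ j ≤ b := by simp [HB]
abbrev Srt (l : List (Fin n)) : Prop := l.Pairwise (fun a b => b ≤ a)
lemma srt_cons_iff {j : Fin n} {t : List (Fin n)} :
    Srt (j :: t) ↔ (∀ x ∈ t, x ≤ j) ∧ Srt t := List.pairwise_cons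
lemma srt_cons_of_hb {j : Fin n} {t : List (Fin n)} (ht : Srt t) (h : HB t j) :
    Srt (j :: t) := by
  cases t with
  | nil => simp [Srt]
  | cons a s =>
    have ha : a ≤ j := h a rfl
    rw [srt_cons_iff]
    refine ⟨?_, ht⟩
    intro x hx
    rcases List.mem_cons.mp hx with rfl | hx
    · exact ha
    · exact le_trans ((srt_cons_iff.mp ht).1 x hx) ha
lemma hb_of_srt_cons {j : Fin n} {t : List (Fin n)} (h : Srt (j :: t)) : HB t j := by
  intro x hx
  exact (srt_cons_iff.mp h).1 x (List.mem_of_mem_head? hx)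
noncomputable def F (r : Fin n → Fin n → A) : Fin n → List (Fin n) → (List (Fin n) →₀ A)
  | i, [] => single [i] 1
  | i, j :: t => if j ≤ i then single (i :: j :: t) 1
      else mapDomain (j :: ·) (F r i t) + r i j • single t 1
variable (r : Fin n → Fin n → A)
lemma F_nil (i : Fin n) : F r i [] = single [i] 1 := rfl
lemma F_easy {i j : Fin n} (t : List (Fin n)) (h : j ≤ i) :
    F r i (j :: t) = single (i :: j :: t) 1 := by simp [F, h]
lemma F_hard {i j : Fin n} (t : List (Fin n)) (h : ¬ j ≤ i) :
    F r i (j :: t) = mapDomain (j :: ·) (F r i t) + r i j • single t 1 := by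
  simp [F, h]
lemma F_easy_of_hb {i : Fin n} {t : List (Fin n)} (h : HB t i) :
    F r i t = single (i :: t) 1 := by
  cases t with
  | nil => rfl
  | cons j s => exact F_easy r s (hb_cons.mp h)
noncomputable def rho0 (i : Fin n) : (List (Fin n) →₀ A) →ₗ[A] (List (Fin n) →₀ A) :=
  Finsupp.lift _ A _ (F r i)
lemma rho0_single (i : Fin n) (l : List (Fin n)) (c : A) :
    rho0 r i (single l c) = c • F r i l := by
  simp [rho0, Finsupp.lift_apply, Finsupp.sum_single_index]
lemma rho0_single_one (i : Fin n) (l : List (Fin n)) :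
    rho0 r i (single l 1) = F r i l := by simp [rho0_single]

-- chunk 2
lemma rho0_mapDomain_easy {i k : Fin n} (h : k ≤ i) (u : List (Fin n) →₀ A) :
    rho0 r i (mapDomain (k :: ·) u) = mapDomain (fun m => i :: k :: m) u := by
  induction u using Finsupp.induction_linear with
  | zero => simp
  | add f g hf hg => simp [mapDomain_add, map_add, hf, hg]
  | single l c =>
    rw [mapDomain_single, rho0_single, F_easy r _ h, mapDomain_single, smul_single, smul_eq_mul,
      mul_one]

lemma rho0_mapDomain_hard {i k : Fin n} (h : ¬ k ≤ i) (u : List (Fin n) →₀ A) :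
    rho0 r i (mapDomain (k :: ·) u)
      = mapDomain (k :: ·) (rho0 r i u) + r i k • u := by
  induction u using Finsupp.induction_linear with
  | zero => simp
  | add f g hf hg =>
    simp only [mapDomain_add, map_add, hf, hg, smul_add]
    abel
  | single l c =>
    rw [mapDomain_single, rho0_single, F_hard r _ h, rho0_single, smul_add]
    rw [mapDomain_smul, smul_single, smul_single, smul_single, smul_eq_mul, smul_eq_mul,
      smul_eq_mul, mul_one, mul_comm]

lemma F_support_aux :
    ∀ (l : List (Fin n)) (i b : Fin n), i ≤ b → HB l b → Srt l →
      ∀ m ∈ (F r i l).support, Srt m ∧ HB m b := by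
  classical
  intro l
  induction l with
  | nil =>
    intro i b hi _ _ m hm
    have := Finsupp.support_single_subset hm
    simp only [Finset.mem_singleton] at this
    subst this
    exact ⟨by simp [Srt], by simpa [HB] using hi⟩
  | cons j t IH =>
    intro i b hi hl hs m hm
    by_cases hj : j ≤ i
    · rw [F_easy r _ hj] at hm
      have := Finsupp.support_single_subset hm
      simp only [Finset.mem_singleton] at this
      subst this
      refine ⟨srt_cons_of_hb hs (hb_cons.mpr hj), hb_cons.mpr hi⟩
    · rw [F_hard r _ hj] at hm
      have hm' := Finsupp.support_add hm
      rw [Finset.mem_union] at hm'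
      rcases hm' with hm' | hm'
      · have hm'' := Finsupp.mapDomain_support hm'
        rw [Finset.mem_image] at hm''
        obtain ⟨m', hmm, rfl⟩ := hm''
        have hij : i ≤ j := le_of_not_ge hj
        obtain ⟨sm', hbm'⟩ := IH i j hij (hb_of_srt_cons hs) (srt_cons_iff.mp hs).2 m' hmm
        exact ⟨srt_cons_of_hb sm' hbm', hb_cons.mpr (hb_cons.mp hl)⟩
      · have hm'' := Finsupp.support_smul hm'
        have := Finsupp.support_single_subset hm''
        simp only [Finset.mem_singleton] at this
        subst this
        refine ⟨(srt_cons_iff.mp hs).2, ?_⟩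
        intro x hx
        exact le_trans (hb_of_srt_cons hs x hx) (hb_cons.mp hl)

lemma F_support_srt {i : Fin n} {l : List (Fin n)} (hs : Srt l) :
    ∀ m ∈ (F r i l).support, Srt m := by
  intro m hm
  cases l with
  | nil => exact (F_support_aux r [] i i le_rfl (hb_nil i) hs m hm).1
  | cons j t =>
    exact (F_support_aux r (j :: t) i (i ⊔ j) le_sup_left
      (hb_cons.mpr le_sup_right) hs m hm).1


lemma comm_lt (hr : ∀ a b, r a b + r b a = 0) {i j : Fin n} (hji : j < i) :
    ∀ {l : List (Fin n)}, Srt l →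
      rho0 r i (F r j l) = rho0 r j (F r i l) + r i j • single l 1 := by
  have hij : ¬ i ≤ j := not_le.mpr hji
  have hji' : j ≤ i := le_of_lt hji
  have hcancel : ∀ u : List (Fin n) →₀ A, r j i • u + r i j • u = 0 := by
    intro u; rw [← add_smul, hr j i, zero_smul]
  intro l
  induction l with
  | nil =>
    intro _
    rw [F_nil, F_nil, rho0_single_one, rho0_single_one, F_easy r _ hji', F_hard r _ hij,
      F_nil, mapDomain_single, add_assoc, hcancel, add_zero]
  | cons k t IH =>
    intro hs
    have ht : Srt t := (srt_cons_iff.mp hs).2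
    have hbt : HB t k := hb_of_srt_cons hs
    by_cases hk1 : k ≤ j
    · rw [F_easy r _ hk1, rho0_single_one, F_easy r _ hji', F_easy r _ (le_trans hk1 hji'),
        rho0_single_one, F_hard r _ hij, F_easy r _ hk1, mapDomain_single, add_assoc,
        hcancel, add_zero]
    · by_cases hk2 : k ≤ i
      · have hbti : HB t i := fun x hx => le_trans (hbt x hx) hk2
        simp only [F_hard r _ hk1, F_easy r _ hk2, map_add, map_smul,
          rho0_mapDomain_easy r hk2, rho0_single_one, F_hard r _ hij,
          mapDomain_add, mapDomain_smul, mapDomain_single, ← mapDomain_comp,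
          F_easy_of_hb r hbti, Function.comp_def]
        rw [add_assoc, hcancel, add_zero]
      · have hk3 : ¬ k ≤ j := fun h => hk2 (le_trans h hji')
        simp only [F_hard r _ hk3, F_hard r _ hk2, map_add, map_smul,
          rho0_mapDomain_hard r hk2, rho0_mapDomain_hard r hk3, rho0_single_one, IH ht,
          mapDomain_add, mapDomain_smul, mapDomain_single]
        abel


lemma comm_all (hr0 : ∀ a, r a a = 0) (hr : ∀ a b, r a b + r b a = 0) (i j : Fin n)
    {l : List (Fin n)} (hs : Srt l) :
    rho0 r i (F r j l) = rho0 r j (F r i l) + r i j • single l 1 := by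
  rcases lt_trichotomy j i with h | h | h
  · exact comm_lt r hr h hs
  · subst h
    rw [hr0, zero_smul, add_zero]
  · have h2 := comm_lt r hr h hs
    have h3 : r i j = - r j i := eq_neg_of_add_eq_zero_left (hr i j)
    rw [h2, h3, neg_smul, add_assoc, add_neg_cancel, add_zero]

section Vlevel

variable {V : Type*} [AddCommGroup V] [Module A V]
variable (e : Module.Basis (Fin n) A V) (ω : V →ₗ[A] V →ₗ[A] A) (lam : A)

/-- the structure constants -/
noncomputable def rr : Fin n → Fin n → A := fun i j => lam * ω (e i) (e j)

noncomputable def rho : V →ₗ[A] Module.End A (List (Fin n) →₀ A) :=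
  e.constr A (fun i => rho0 (rr e ω lam) i)

lemma rho_basis (i : Fin n) : rho e ω lam (e i) = rho0 (rr e ω lam) i :=
  Module.Basis.constr_basis e A _ i

noncomputable def rhoHat : TensorAlgebra A V →ₐ[A] Module.End A (List (Fin n) →₀ A) :=
  TensorAlgebra.lift A (rho e ω lam)

/-- span of sorted basis vectors -/
noncomputable def SP : Submodule A (List (Fin n) →₀ A) :=
  Submodule.span A {u | ∃ l : List (Fin n), Srt l ∧ u = single l 1}

lemma mem_SP_of_support {u : List (Fin n) →₀ A} (h : ∀ m ∈ u.support, Srt m) :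
    u ∈ (SP : Submodule A (List (Fin n) →₀ A)) := by
  rw [← Finsupp.sum_single u]
  refine Submodule.sum_mem _ ?_
  intro m hm
  have : single m (u m) = (u m) • single m 1 := by
    rw [smul_single, smul_eq_mul, mul_one]
  rw [this]
  exact Submodule.smul_mem _ _ (Submodule.subset_span ⟨m, h m hm, rfl⟩)

lemma rho0_mem_SP (i : Fin n) {u : List (Fin n) →₀ A} (hu : u ∈ (SP : Submodule A _)) :
    rho0 (rr e ω lam) i u ∈ (SP : Submodule A (List (Fin n) →₀ A)) := by
  induction hu using Submodule.span_induction with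
  | mem x hx =>
    obtain ⟨l, hl, rfl⟩ := hx
    rw [rho0_single_one]
    exact mem_SP_of_support (F_support_srt _ hl)
  | zero => rw [map_zero]; exact Submodule.zero_mem _
  | add x y hx hy px py => rw [map_add]; exact Submodule.add_mem _ px py
  | smul a x hx px => rw [map_smul]; exact Submodule.smul_mem _ _ px

lemma rho_mem_SP (x : V) {u : List (Fin n) →₀ A} (hu : u ∈ (SP : Submodule A _)) :
    rho e ω lam x u ∈ (SP : Submodule A (List (Fin n) →₀ A)) := by
  have hx : x ∈ Submodule.span A (Set.range e) := by rw [e.span_eq]; trivial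
  induction hx using Submodule.span_induction with
  | mem x hx =>
    obtain ⟨i, rfl⟩ := hx
    rw [rho_basis]
    exact rho0_mem_SP e ω lam i hu
  | zero => rw [map_zero]; exact Submodule.zero_mem _
  | add x y hx hy px py =>
    rw [map_add, LinearMap.add_apply]
    exact Submodule.add_mem _ px py
  | smul a x hx px =>
    rw [map_smul, LinearMap.smul_apply]
    exact Submodule.smul_mem _ _ px

lemma rhoHat_mem_SP (z : TensorAlgebra A V) {u : List (Fin n) →₀ A}
    (hu : u ∈ (SP : Submodule A _)) :
    rhoHat e ω lam z u ∈ (SP : Submodule A (List (Fin n) →₀ A)) := by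
  induction z using TensorAlgebra.induction generalizing u with
  | algebraMap a =>
    rw [AlgHom.commutes]
    have : (algebraMap A (Module.End A (List (Fin n) →₀ A)) a) u = a • u := rfl
    rw [this]
    exact Submodule.smul_mem _ _ hu
  | ι x =>
    rw [rhoHat, TensorAlgebra.lift_ι_apply]
    exact rho_mem_SP e ω lam x hu
  | mul a b pa pb =>
    rw [map_mul, Module.End.mul_apply]
    exact pa (pb hu)
  | add a b pa pb =>
    rw [map_add, LinearMap.add_apply]
    exact Submodule.add_mem _ (pa hu) (pb hu)


variable (halt : ∀ x : V, ω x x = 0)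

include halt

lemma omega_anti (x y : V) : ω x y + ω y x = 0 := by
  have h := halt (x + y)
  simp only [map_add, LinearMap.add_apply, halt] at h
  rw [zero_add, add_zero] at h
  rw [add_comm]
  exact h

lemma rr_diag (i : Fin n) : rr e ω lam i i = 0 := by simp [rr, halt]

lemma rr_anti (i j : Fin n) : rr e ω lam i j + rr e ω lam j i = 0 := by
  show lam * ω (e i) (e j) + lam * ω (e j) (e i) = 0
  rw [← mul_add, omega_anti ω halt, mul_zero]

lemma comm_e (i j : Fin n) {u : List (Fin n) →₀ A} (hu : u ∈ (SP : Submodule A _)) :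
    rho0 (rr e ω lam) i (rho0 (rr e ω lam) j u)
      = rho0 (rr e ω lam) j (rho0 (rr e ω lam) i u) + rr e ω lam i j • u := by
  induction hu using Submodule.span_induction with
  | mem x hx =>
    obtain ⟨l, hl, rfl⟩ := hx
    rw [rho0_single_one, rho0_single_one]
    exact comm_all _ (rr_diag e ω lam halt) (rr_anti e ω lam halt) i j hl
  | zero => simp
  | add x y hx hy px py =>
    rw [map_add, map_add, px, py, map_add, map_add, smul_add]
    abel
  | smul a x hx px =>
    rw [map_smul, map_smul, px, map_smul, map_smul, smul_add, smul_comm a]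

lemma comm_V (x y : V) {u : List (Fin n) →₀ A} (hu : u ∈ (SP : Submodule A _)) :
    rho e ω lam x (rho e ω lam y u)
      = rho e ω lam y (rho e ω lam x u) + (lam * ω x y) • u := by
  have hx : x ∈ Submodule.span A (Set.range e) := by rw [e.span_eq]; trivial
  induction hx using Submodule.span_induction with
  | mem x hx =>
    obtain ⟨i, rfl⟩ := hx
    have hy : y ∈ Submodule.span A (Set.range e) := by rw [e.span_eq]; trivial
    induction hy using Submodule.span_induction with
    | mem y hy =>
      obtain ⟨j, rfl⟩ := hy
      rw [rho_basis, rho_basis]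
      exact comm_e e ω lam halt i j hu
    | zero => simp
    | add y z hy hz py pz =>
      simp only [map_add, LinearMap.add_apply, py, pz, mul_add]
      module
    | smul a y hy py =>
      simp only [map_smul, LinearMap.smul_apply, py, smul_eq_mul]
      module
  | zero => simp
  | add x z hx hz px pz =>
    simp only [map_add, LinearMap.add_apply, px, pz, mul_add]
    module
  | smul a x hx px =>
    simp only [map_smul, LinearMap.smul_apply, px, smul_eq_mul]
    module

lemma rhoHat_rel (x y : V) {u : List (Fin n) →₀ A} (hu : u ∈ (SP : Submodule A _)) :
    rhoHat e ω lam (TensorAlgebra.ι A x * TensorAlgebra.ι A y -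
        TensorAlgebra.ι A y * TensorAlgebra.ι A x -
        algebraMap A (TensorAlgebra A V) (lam * ω x y)) u = 0 := by
  rw [map_sub, map_sub, map_mul, map_mul, AlgHom.commutes]
  simp only [rhoHat, TensorAlgebra.lift_ι_apply, LinearMap.sub_apply, Module.End.mul_apply]
  have halg : (algebraMap A (Module.End A (List (Fin n) →₀ A)) (lam * ω x y)) u
      = (lam * ω x y) • u := rfl
  rw [halg, comm_V e ω lam halt x y hu]
  abel

end Vlevel

section Tlevel

variable {A : Type*} [CommRing A] {n : ℕ}
variable {V : Type*} [AddCommGroup V] [Module A V]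
variable (e : Module.Basis (Fin n) A V) (ω : V →ₗ[A] V →ₗ[A] A) (lam : A)

noncomputable def mon (l : List (Fin n)) : TensorAlgebra A V :=
  (l.map fun i => TensorAlgebra.ι A (e i)).prod

lemma mon_nil : mon e ([] : List (Fin n)) = 1 := rfl

lemma mon_cons (i : Fin n) (t : List (Fin n)) :
    mon e (i :: t) = TensorAlgebra.ι A (e i) * mon e t := by
  simp [mon]

lemma mon_append (l m : List (Fin n)) : mon e (l ++ m) = mon e l * mon e m := by
  simp [mon]

lemma weylIdeal_mul_left (c : TensorAlgebra A V) {z : TensorAlgebra A V}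
    (hz : z ∈ weylIdeal A V ω lam) : c * z ∈ weylIdeal A V ω lam := by
  induction hz using Submodule.span_induction with
  | mem x hx =>
    obtain ⟨a, b, v, w, rfl⟩ := hx
    refine Submodule.subset_span ⟨c * a, b, v, w, ?_⟩
    rw [← mul_assoc, ← mul_assoc]
  | zero => rw [mul_zero]; exact Submodule.zero_mem _
  | add x y hx hy px py => rw [mul_add]; exact Submodule.add_mem _ px py
  | smul a x hx px => rw [mul_smul_comm]; exact Submodule.smul_mem _ _ px

lemma weylIdeal_mul_right (c : TensorAlgebra A V) {z : TensorAlgebra A V}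
    (hz : z ∈ weylIdeal A V ω lam) : z * c ∈ weylIdeal A V ω lam := by
  induction hz using Submodule.span_induction with
  | mem x hx =>
    obtain ⟨a, b, v, w, rfl⟩ := hx
    refine Submodule.subset_span ⟨a, b * c, v, w, ?_⟩
    rw [← mul_assoc]
  | zero => rw [zero_mul]; exact Submodule.zero_mem _
  | add x y hx hy px py => rw [add_mul]; exact Submodule.add_mem _ px py
  | smul a x hx px => rw [smul_mul_assoc]; exact Submodule.smul_mem _ _ px

noncomputable def monLift : (List (Fin n) →₀ A) →ₗ[A] TensorAlgebra A V :=
  Finsupp.lift _ A _ (mon e)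

lemma monLift_single (l : List (Fin n)) (c : A) :
    monLift e (Finsupp.single l c) = c • mon e l := by
  simp [monLift, Finsupp.lift_apply, Finsupp.sum_single_index]

lemma monLift_mapDomain (j : Fin n) (u : List (Fin n) →₀ A) :
    monLift e (Finsupp.mapDomain (j :: ·) u) = TensorAlgebra.ι A (e j) * monLift e u := by
  induction u using Finsupp.induction_linear with
  | zero => simp
  | add f g hf hg => simp [Finsupp.mapDomain_add, map_add, hf, hg, mul_add]
  | single l c =>
    rw [Finsupp.mapDomain_single, monLift_single, monLift_single, mon_cons, mul_smul_comm]

noncomputable def MS : Submodule A (TensorAlgebra A V) :=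
  Submodule.span A {z | ∃ l : List (Fin n), Srt l ∧ z = mon e l}

lemma monLift_mem_MS {u : List (Fin n) →₀ A} (h : ∀ m ∈ u.support, Srt m) :
    monLift e u ∈ MS e := by
  rw [← Finsupp.sum_single u, map_finsuppSum]
  refine Submodule.sum_mem _ ?_
  intro m hm
  show monLift e (Finsupp.single m (u m)) ∈ MS e
  rw [monLift_single]
  exact Submodule.smul_mem _ _ (Submodule.subset_span ⟨m, h m hm, rfl⟩)

lemma key_straighten (i : Fin n) :
    ∀ l : List (Fin n),
      TensorAlgebra.ι A (e i) * mon e l - monLift e (F (rr e ω lam) i l)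
        ∈ weylIdeal A V ω lam := by
  intro l
  induction l with
  | nil =>
    rw [F_nil, monLift_single, one_smul, mon_nil]
    have : mon e [i] = TensorAlgebra.ι A (e i) * 1 := by simp [mon]
    rw [this, sub_self]
    exact Submodule.zero_mem _
  | cons j t IH =>
    by_cases hj : j ≤ i
    · rw [F_easy _ _ hj, monLift_single, one_smul, mon_cons]
      rw [show mon e (i :: j :: t) = TensorAlgebra.ι A (e i) * mon e (j :: t) from
        mon_cons e i (j :: t), mon_cons, sub_self]
      exact Submodule.zero_mem _
    · rw [F_hard _ _ hj, map_add, monLift_mapDomain, map_smul, monLift_single, one_smul]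
      have hgen : (1 : TensorAlgebra A V) *
          (TensorAlgebra.ι A (e i) * TensorAlgebra.ι A (e j) -
            TensorAlgebra.ι A (e j) * TensorAlgebra.ι A (e i) -
            algebraMap A (TensorAlgebra A V) (lam * ω (e i) (e j))) * mon e t
          ∈ weylIdeal A V ω lam :=
        Submodule.subset_span ⟨1, mon e t, e i, e j, rfl⟩
      have h2 : TensorAlgebra.ι A (e j) *
          (TensorAlgebra.ι A (e i) * mon e t - monLift e (F (rr e ω lam) i t))
          ∈ weylIdeal A V ω lam := weylIdeal_mul_left ω lam _ IH
      have heq : TensorAlgebra.ι A (e i) * mon e (j :: t) -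
          (TensorAlgebra.ι A (e j) * monLift e (F (rr e ω lam) i t) +
            rr e ω lam i j • mon e t)
          = (1 : TensorAlgebra A V) *
          (TensorAlgebra.ι A (e i) * TensorAlgebra.ι A (e j) -
            TensorAlgebra.ι A (e j) * TensorAlgebra.ι A (e i) -
            algebraMap A (TensorAlgebra A V) (lam * ω (e i) (e j))) * mon e t +
          TensorAlgebra.ι A (e j) *
          (TensorAlgebra.ι A (e i) * mon e t - monLift e (F (rr e ω lam) i t)) := by
        rw [mon_cons, show rr e ω lam i j = lam * ω (e i) (e j) from rfl, Algebra.smul_def]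
        noncomm_ring
      rw [heq]
      exact Submodule.add_mem _ hgen h2

lemma step_mul (i : Fin n) {s : TensorAlgebra A V} (hs : s ∈ MS e) :
    TensorAlgebra.ι A (e i) * s ∈ MS e ⊔ weylIdeal A V ω lam := by
  induction hs using Submodule.span_induction with
  | mem x hx =>
    obtain ⟨m, hm, rfl⟩ := hx
    have hdecomp : TensorAlgebra.ι A (e i) * mon e m
        = monLift e (F (rr e ω lam) i m) +
          (TensorAlgebra.ι A (e i) * mon e m - monLift e (F (rr e ω lam) i m)) := by
      abel
    rw [hdecomp]
    exact Submodule.add_mem _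
      (Submodule.mem_sup_left (monLift_mem_MS e (F_support_srt _ hm)))
      (Submodule.mem_sup_right (key_straighten e ω lam i m))
  | zero => rw [mul_zero]; exact Submodule.zero_mem _
  | add x y hx hy px py => rw [mul_add]; exact Submodule.add_mem _ px py
  | smul a x hx px => rw [mul_smul_comm]; exact Submodule.smul_mem _ _ px

lemma mon_mem_sup : ∀ l : List (Fin n), mon e l ∈ MS e ⊔ weylIdeal A V ω lam := by
  intro l
  induction l with
  | nil => exact Submodule.mem_sup_left (Submodule.subset_span ⟨[], by simp [Srt], rfl⟩)
  | cons i t IH =>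
    obtain ⟨s, hs, w, hw, heq⟩ := Submodule.mem_sup.mp IH
    rw [mon_cons, ← heq, mul_add]
    exact Submodule.add_mem _ (step_mul e ω lam i hs)
      (Submodule.mem_sup_right (weylIdeal_mul_left ω lam _ hw))

lemma MS_mul {s s' : TensorAlgebra A V} (hs : s ∈ MS e) (hs' : s' ∈ MS e) :
    s * s' ∈ MS e ⊔ weylIdeal A V ω lam := by
  induction hs using Submodule.span_induction with
  | mem x hx =>
    obtain ⟨l, hl, rfl⟩ := hx
    induction hs' using Submodule.span_induction with
    | mem y hy =>
      obtain ⟨m, hm, rfl⟩ := hy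
      rw [← mon_append]
      exact mon_mem_sup e ω lam (l ++ m)
    | zero => rw [mul_zero]; exact Submodule.zero_mem _
    | add x y hx hy px py => rw [mul_add]; exact Submodule.add_mem _ px py
    | smul a x hx px => rw [mul_smul_comm]; exact Submodule.smul_mem _ _ px
  | zero => rw [zero_mul]; exact Submodule.zero_mem _
  | add x y hx hy px py => rw [add_mul]; exact Submodule.add_mem _ px py
  | smul a x hx px => rw [smul_mul_assoc]; exact Submodule.smul_mem _ _ px

lemma sup_eq_top : ∀ z : TensorAlgebra A V, z ∈ MS e ⊔ weylIdeal A V ω lam := by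
  intro z
  induction z using TensorAlgebra.induction with
  | algebraMap a =>
    rw [Algebra.algebraMap_eq_smul_one]
    refine Submodule.smul_mem _ _ (Submodule.mem_sup_left ?_)
    exact Submodule.subset_span ⟨[], by simp [Srt], rfl⟩
  | ι x =>
    have hx : x ∈ Submodule.span A (Set.range e) := by rw [e.span_eq]; trivial
    induction hx using Submodule.span_induction with
    | mem x hx =>
      obtain ⟨i, rfl⟩ := hx
      refine Submodule.mem_sup_left (Submodule.subset_span ⟨[i], by simp [Srt], ?_⟩)
      simp [mon]
    | zero => rw [map_zero]; exact Submodule.zero_mem _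
    | add x y hx hy px py => rw [map_add]; exact Submodule.add_mem _ px py
    | smul a x hx px => rw [map_smul]; exact Submodule.smul_mem _ _ px
  | mul a b pa pb =>
    obtain ⟨s, hs, w, hw, heq⟩ := Submodule.mem_sup.mp pa
    obtain ⟨s', hs', w', hw', heq'⟩ := Submodule.mem_sup.mp pb
    rw [← heq, ← heq', add_mul, mul_add]
    refine Submodule.add_mem _ (Submodule.add_mem _ (MS_mul e ω lam hs hs') ?_) ?_
    · exact Submodule.mem_sup_right (weylIdeal_mul_left ω lam _ hw')
    · exact Submodule.mem_sup_right (weylIdeal_mul_right ω lam _ hw)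
  | add a b pa pb => exact Submodule.add_mem _ pa pb

variable (halt : ∀ x : V, ω x x = 0)
include halt

lemma eval_weylIdeal {z : TensorAlgebra A V} (hz : z ∈ weylIdeal A V ω lam) :
    rhoHat e ω lam z (Finsupp.single [] 1) = 0 := by
  have h0 : (Finsupp.single ([] : List (Fin n)) (1 : A)) ∈ (SP : Submodule A _) :=
    Submodule.subset_span ⟨[], by simp [Srt], rfl⟩
  induction hz using Submodule.span_induction with
  | mem x hx =>
    obtain ⟨a, b, v, w, rfl⟩ := hx
    rw [map_mul, map_mul, Module.End.mul_apply, Module.End.mul_apply,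
      rhoHat_rel e ω lam halt v w (rhoHat_mem_SP e ω lam b h0), map_zero]
  | zero => simp
  | add x y hx hy px py => rw [map_add, LinearMap.add_apply, px, py, add_zero]
  | smul a x hx px => rw [map_smul, LinearMap.smul_apply, px, smul_zero]

lemma eval_mon {l : List (Fin n)} (hs : Srt l) :
    rhoHat e ω lam (mon e l) (Finsupp.single [] 1) = Finsupp.single l 1 := by
  induction l with
  | nil => rw [mon_nil, map_one]; rfl
  | cons i t IH =>
    have ht : Srt t := (srt_cons_iff.mp hs).2
    rw [mon_cons, map_mul, Module.End.mul_apply, IH ht]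
    rw [show rhoHat e ω lam (TensorAlgebra.ι A (e i)) = rho e ω lam (e i) from
      TensorAlgebra.lift_ι_apply _ _, rho_basis, rho0_single_one,
      F_easy_of_hb _ (hb_of_srt_cons hs)]

end Tlevel

end PBWAux

/-- in the setting of the PBW theorem for the Weyl algebra, the tensor
algebra decomposes as a direct sum of `A`-modules `T(V) = S̃(V) ⊕ I_W`, where `S̃(V)` is
spanned by the ordered monomials in a basis adapted to a Lagrangian splitting and `I_W`
is the two-sided ideal generated by the Weyl relations. -/
theorem tensor_algebra_pbw_decomposition
    (A V : Type*) [CommRing A] [AddCommGroup V] [Module A V]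
    (ν : ℕ) (e : Module.Basis (Fin (2 * ν)) A V)
    (ω : V →ₗ[A] V →ₗ[A] A) (lam : A)
    (halt : ∀ x : V, ω x x = 0)
    (hnondeg : ∀ x : V, (∀ y : V, ω x y = 0) → x = 0)
    (hL : ∀ i j : Fin (2 * ν), (i : ℕ) < ν → (j : ℕ) < ν → ω (e i) (e j) = 0)
    (hL' : ∀ i j : Fin (2 * ν), ν ≤ (i : ℕ) → ν ≤ (j : ℕ) → ω (e i) (e j) = 0) :
    IsCompl (orderedMonSpan A V (e : Fin (2 * ν) → V)) (weylIdeal A V ω lam) := by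
  classical
  have hOM : orderedMonSpan A V (⇑e) = PBWAux.MS e := rfl
  rw [hOM]
  constructor
  · -- disjointness
    rw [disjoint_iff_inf_le]
    rintro x ⟨hxS, hxW⟩
    -- the evaluation map
    set E : TensorAlgebra A V →ₗ[A] (List (Fin (2 * ν)) →₀ A) :=
      (LinearMap.applyₗ (Finsupp.single ([] : List (Fin (2 * ν))) (1 : A))).comp
        (PBWAux.rhoHat e ω lam).toLinearMap with hE
    have hEdef : ∀ z, E z = PBWAux.rhoHat e ω lam z (Finsupp.single [] 1) := fun z => rfl
    -- represent x as a finite combination of sorted monomials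
    have hxS' : x ∈ Submodule.span A
        (Set.range fun I : {l : List (Fin (2 * ν)) // PBWAux.Srt l} =>
          PBWAux.mon e I.1) := by
      have hset : {z | ∃ l : List (Fin (2 * ν)), PBWAux.Srt l ∧ z = PBWAux.mon e l}
          = Set.range (fun I : {l : List (Fin (2 * ν)) // PBWAux.Srt l} =>
            PBWAux.mon e I.1) := by
        ext z
        constructor
        · rintro ⟨l, hl, rfl⟩; exact ⟨⟨l, hl⟩, rfl⟩
        · rintro ⟨⟨l, hl⟩, rfl⟩; exact ⟨l, hl, rfl⟩
      rw [← hset]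
      exact hxS
    obtain ⟨c, hc⟩ := Finsupp.mem_span_range_iff_exists_finsupp.mp hxS'
    have hEx : E x = Finsupp.mapDomain (Subtype.val) c := by
      rw [← hc, map_finsuppSum]
      rw [Finsupp.mapDomain]
      congr 1
      ext I a
      rw [map_smul, hEdef, PBWAux.eval_mon e ω lam halt I.2, Finsupp.smul_single,
        smul_eq_mul, mul_one]
    have hEx0 : E x = 0 := by
      rw [hEdef]
      exact PBWAux.eval_weylIdeal e ω lam halt hxW
    have hc0 : c = 0 :=
      Finsupp.mapDomain_injective Subtype.val_injective (by rw [← hEx, hEx0]; simp)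
    rw [← hc, hc0]
    simp
  · -- codisjointness
    rw [codisjoint_iff, eq_top_iff]
    intro z _
    exact PBWAux.sup_eq_top e ω lam z
end

section
/- Let V = L ⊕ L' be a symplectic A-module with Lagrangian summands, and let S̃₁(V) ⊆ T(V) be the span of ordered monomials e_I with I ∈ Υ₁ (nonincreasing sequences containing at least one index ≤ ν, i.e., at least one factor from L at the rightmost position). Let σ : W(V) → S(V) be the PBW isomorphism μ_S ∘ ι₁ ∘ (μ_W ∘ ι₁)⁻¹ restricted appropriately. Then σ identifies the left ideal I_L of W(V) generated by L with the ideal I_S^{(L)} of S(V) generated by L; equivalently, I_L = μ_W(S̃₁(V)) and I_S^{(L)} = μ_S(S̃₁(V)). -/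
/-- The submodule `S̃₁(V) ⊆ T(V)` spanned by the ordered monomials `e_I` with
`I ∈ Υ₁`, i.e. nonincreasing sequences containing at least one index `< ν`
(at least one factor from `L`). -/
noncomputable def orderedMonSpanOne (A V : Type*) [CommRing A] [AddCommGroup V]
    [Module A V] {ν : ℕ} (e : Fin (2 * ν) → V) : Submodule A (TensorAlgebra A V) :=
  Submodule.span A
    {z | ∃ l : List (Fin (2 * ν)), List.Pairwise (fun a b => b ≤ a) l ∧
      (∃ i ∈ l, (i : ℕ) < ν) ∧ z = tensorMon A V e l}

namespace PBWAux

open TensorAlgebra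

variable {A V B : Type*} [CommRing A] [AddCommGroup V] [Module A V]
  [Ring B] [Algebra A B] {ν : ℕ}

local instance : IsTotal (Fin (2 * ν)) (fun a b => b ≤ a) := ⟨fun a b => le_total b a⟩
local instance : IsTrans (Fin (2 * ν)) (fun a b => b ≤ a) :=
  ⟨fun _ _ _ h1 h2 => le_trans h2 h1⟩
local instance : DecidableRel (fun (a b : Fin (2 * ν)) => b ≤ a) :=
  fun a b => inferInstanceAs (Decidable (b ≤ a))

lemma tensorMon_nil (e : Fin (2 * ν) → V) : tensorMon A V e [] = 1 := rfl

lemma tensorMon_cons (e : Fin (2 * ν) → V) (i : Fin (2 * ν)) (l : List (Fin (2 * ν))) :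
    tensorMon A V e (i :: l) = TensorAlgebra.ι A (e i) * tensorMon A V e l := by
  simp [tensorMon]

lemma tensorMon_append (e : Fin (2 * ν) → V) (l₁ l₂ : List (Fin (2 * ν))) :
    tensorMon A V e (l₁ ++ l₂) = tensorMon A V e l₁ * tensorMon A V e l₂ := by
  simp [tensorMon]

variable (e : Fin (2 * ν) → V) (f : TensorAlgebra A V →ₐ[A] B) (c : V → V → A)

/-- commutation within `L` -/
lemma commL
    (hcomm : ∀ x y : V, f (ι A x * ι A y) = f (ι A y * ι A x) + algebraMap A B (c x y))
    (hc : ∀ i j : Fin (2 * ν), (i : ℕ) < ν → (j : ℕ) < ν → c (e i) (e j) = 0) :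
    ∀ l : List (Fin (2 * ν)), (∀ j ∈ l, (j : ℕ) < ν) → ∀ i : Fin (2 * ν), (i : ℕ) < ν →
      f (tensorMon A V e l * ι A (e i)) = f (ι A (e i) * tensorMon A V e l) := by
  intro l
  induction l with
  | nil => intro _ i _; rw [tensorMon_nil, one_mul, mul_one]
  | cons j t IH =>
    intro hl i hi
    have hj : (j : ℕ) < ν := hl j (List.mem_cons_self)
    have ht : ∀ k ∈ t, (k : ℕ) < ν := fun k hk => hl k (List.mem_cons_of_mem _ hk)
    have h1 : f (ι A (e j)) * f (ι A (e i)) = f (ι A (e i)) * f (ι A (e j)) := by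
      have := hcomm (e j) (e i)
      rw [hc j i hj hi, map_zero, add_zero, map_mul, map_mul] at this
      exact this
    have h2 : f (tensorMon A V e t) * f (ι A (e i)) = f (ι A (e i)) * f (tensorMon A V e t) := by
      have := IH ht i hi
      rwa [map_mul, map_mul] at this
    simp only [tensorMon_cons, map_mul, mul_assoc]
    rw [h2, ← mul_assoc, h1, mul_assoc]

/-- right insertion of a Lagrangian factor -/
lemma insertR
    (hcomm : ∀ x y : V, f (ι A x * ι A y) = f (ι A y * ι A x) + algebraMap A B (c x y))
    (hc : ∀ i j : Fin (2 * ν), (i : ℕ) < ν → (j : ℕ) < ν → c (e i) (e j) = 0) :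
    ∀ l : List (Fin (2 * ν)), List.Pairwise (fun a b => b ≤ a) l →
      ∀ i : Fin (2 * ν), (i : ℕ) < ν →
      f (tensorMon A V e l * ι A (e i)) =
        f (tensorMon A V e (List.orderedInsert (fun a b => b ≤ a) i l)) := by
  intro l
  induction l with
  | nil => intro _ i _; rw [tensorMon_nil, one_mul, List.orderedInsert_nil, tensorMon_cons,
      tensorMon_nil, mul_one]
  | cons j t IH =>
    intro hsort i hi
    have htj : ∀ k ∈ t, k ≤ j := (List.pairwise_cons.mp hsort).1
    have ht : List.Pairwise (fun a b => b ≤ a) t := (List.pairwise_cons.mp hsort).2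
    by_cases hij : j ≤ i
    · have hall : ∀ k ∈ j :: t, (k : ℕ) < ν := by
        intro k hk
        rcases List.mem_cons.mp hk with rfl | hk
        · exact lt_of_le_of_lt (Fin.le_def.mp hij) hi
        · exact lt_of_le_of_lt (Fin.le_def.mp (le_trans (htj k hk) hij)) hi
      rw [commL e f c hcomm hc (j :: t) hall i hi]
      rw [List.orderedInsert, if_pos hij]
      simp only [tensorMon_cons]
    · rw [List.orderedInsert, if_neg hij]
      rw [tensorMon_cons, mul_assoc, map_mul, IH ht i hi, ← map_mul, ← tensorMon_cons]


/-- Set of images of sorted monomials. -/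
def sortedSet : Set B :=
  {z | ∃ m : List (Fin (2 * ν)), List.Pairwise (fun a b => b ≤ a) m ∧ z = f (tensorMon A V e m)}

/-- Set of images of sorted monomials with entries bounded by `b`. -/
def sortedSetLe (b : Fin (2 * ν)) : Set B :=
  {z | ∃ m : List (Fin (2 * ν)), List.Pairwise (fun a b => b ≤ a) m ∧ (∀ j ∈ m, j ≤ b) ∧
    z = f (tensorMon A V e m)}

lemma sortedSetLe_subset (b : Fin (2 * ν)) : sortedSetLe e f b ⊆ sortedSet e f := by
  rintro z ⟨m, hm, _, rfl⟩; exact ⟨m, hm, rfl⟩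

/-- left insertion: multiplying a bounded sorted monomial on the left stays in the
span of bounded sorted monomials. -/
lemma insL
    (hcomm : ∀ x y : V, f (ι A x * ι A y) = f (ι A y * ι A x) + algebraMap A B (c x y)) :
    ∀ l : List (Fin (2 * ν)), List.Pairwise (fun a b => b ≤ a) l →
      ∀ i b : Fin (2 * ν), i ≤ b → (∀ j ∈ l, j ≤ b) →
      f (ι A (e i) * tensorMon A V e l) ∈ Submodule.span A (sortedSetLe e f b) := by
  intro l
  induction l with
  | nil =>
    intro _ i b hib _
    refine Submodule.subset_span ⟨[i], List.pairwise_singleton _ i, ?_, ?_⟩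
    · intro j hj; rw [List.mem_singleton] at hj; exact hj ▸ hib
    · rw [tensorMon_nil, mul_one, tensorMon_cons, tensorMon_nil, mul_one]
  | cons j t IH =>
    intro hsort i b hib hlb
    have htj : ∀ k ∈ t, k ≤ j := (List.pairwise_cons.mp hsort).1
    have ht : List.Pairwise (fun a b => b ≤ a) t := (List.pairwise_cons.mp hsort).2
    have hjb : j ≤ b := hlb j (List.mem_cons_self)
    have htb : ∀ k ∈ t, k ≤ b := fun k hk => hlb k (List.mem_cons_of_mem _ hk)
    by_cases hij : j ≤ i
    · refine Submodule.subset_span ⟨i :: j :: t, ?_, ?_, ?_⟩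
      · refine List.pairwise_cons.mpr ⟨?_, hsort⟩
        intro k hk
        rcases List.mem_cons.mp hk with rfl | hk
        · exact hij
        · exact le_trans (htj k hk) hij
      · intro k hk
        rcases List.mem_cons.mp hk with rfl | hk
        · exact hib
        · exact hlb k hk
      · simp only [tensorMon_cons]
    · have hij' : i ≤ j := le_of_lt (lt_of_not_ge hij)
      have expand : f (ι A (e i) * tensorMon A V e (j :: t)) =
          f (ι A (e j)) * f (ι A (e i) * tensorMon A V e t) +
            c (e i) (e j) • f (tensorMon A V e t) := by
        rw [tensorMon_cons, ← mul_assoc, map_mul, hcomm, add_mul, map_mul, mul_assoc,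
          ← map_mul, ← Algebra.smul_def]
      rw [expand]
      refine Submodule.add_mem _ ?_ ?_
      · have h1 := IH ht i j hij' htj
        have himg := Submodule.map_le_iff_le_comap.mp
          (le_of_eq (Submodule.map_span (LinearMap.mulLeft A (f (ι A (e j))))
            (sortedSetLe e f j)))
        refine Submodule.span_induction (p := fun x _ =>
            f (ι A (e j)) * x ∈ Submodule.span A (sortedSetLe e f b)) ?_ ?_ ?_ ?_ h1
        · rintro x ⟨m, hm, hmle, rfl⟩
          refine Submodule.subset_span ⟨j :: m, ?_, ?_, ?_⟩
          · exact List.pairwise_cons.mpr ⟨hmle, hm⟩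
          · intro k hk
            rcases List.mem_cons.mp hk with rfl | hk
            · exact hjb
            · exact le_trans (hmle k hk) hjb
          · rw [tensorMon_cons, map_mul]
        · show f (ι A (e j)) * 0 ∈ _
          rw [mul_zero]; exact Submodule.zero_mem _
        · intro x y _ _ hx hy
          show f (ι A (e j)) * (x + y) ∈ _
          rw [mul_add]; exact Submodule.add_mem _ hx hy
        · intro a x _ hx
          show f (ι A (e j)) * (a • x) ∈ _
          rw [mul_smul_comm]; exact Submodule.smul_mem _ _ hx
      · exact Submodule.smul_mem _ _
          (Submodule.subset_span ⟨t, ht, htb, rfl⟩)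

/-- multiplying by any monomial preserves the span of sorted monomials -/
lemma mulMon_mem
    (hcomm : ∀ x y : V, f (ι A x * ι A y) = f (ι A y * ι A x) + algebraMap A B (c x y)) :
    ∀ l : List (Fin (2 * ν)), ∀ w ∈ Submodule.span A (sortedSet e f),
      f (tensorMon A V e l) * w ∈ Submodule.span A (sortedSet e f) := by
  intro l
  induction l with
  | nil => intro w hw; rw [tensorMon_nil, map_one, one_mul]; exact hw
  | cons i t IH =>
    intro w hw
    rw [tensorMon_cons, map_mul, mul_assoc]
    have hin := IH w hw
    refine Submodule.span_induction (p := fun x _ =>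
        f (ι A (e i)) * x ∈ Submodule.span A (sortedSet e f)) ?_ ?_ ?_ ?_ hin
    · rintro x ⟨m, hm, rfl⟩
      match m with
      | [] =>
        rw [tensorMon_nil, map_one, mul_one]
        exact Submodule.subset_span ⟨[i], List.pairwise_singleton _ i, by
          rw [tensorMon_cons, tensorMon_nil, mul_one]⟩
      | k :: t' =>
        have hmax : ∀ j ∈ k :: t', j ≤ max i k := by
          intro j hj
          rcases List.mem_cons.mp hj with rfl | hj
          · exact le_max_right _ _
          · exact le_trans ((List.pairwise_cons.mp hm).1 j hj) (le_max_right _ _)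
        have := insL e f c hcomm (k :: t') hm i (max i k) (le_max_left _ _) hmax
        rw [← map_mul]
        exact Submodule.span_mono (sortedSetLe_subset e f _) this
    · show f (ι A (e i)) * 0 ∈ _
      rw [mul_zero]; exact Submodule.zero_mem _
    · intro x y _ _ hx hy
      show f (ι A (e i)) * (x + y) ∈ _
      rw [mul_add]; exact Submodule.add_mem _ hx hy
    · intro a x _ hx
      show f (ι A (e i)) * (a • x) ∈ _
      rw [mul_smul_comm]; exact Submodule.smul_mem _ _ hx

/-- PBW spanning: every element of the image is in the span of sorted monomials. -/
lemma top_span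
    (hcomm : ∀ x y : V, f (ι A x * ι A y) = f (ι A y * ι A x) + algebraMap A B (c x y))
    (hspan : Submodule.span A (Set.range e) = ⊤) :
    ∀ t : TensorAlgebra A V, f t ∈ Submodule.span A (sortedSet e f) := by
  have hone : (1 : B) ∈ Submodule.span A (sortedSet e f) :=
    Submodule.subset_span ⟨[], List.Pairwise.nil, by rw [tensorMon_nil, map_one]⟩
  intro t
  induction t using TensorAlgebra.induction with
  | algebraMap r =>
    rw [AlgHom.commutes, Algebra.algebraMap_eq_smul_one]
    exact Submodule.smul_mem _ _ hone
  | ι x =>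
    have hx : x ∈ Submodule.span A (Set.range e) := hspan ▸ Submodule.mem_top
    refine Submodule.span_induction (p := fun x _ =>
        f (ι A x) ∈ Submodule.span A (sortedSet e f)) ?_ ?_ ?_ ?_ hx
    · rintro x ⟨i, rfl⟩
      exact Submodule.subset_span ⟨[i], List.pairwise_singleton _ i, by
        rw [tensorMon_cons, tensorMon_nil, mul_one]⟩
    · show f (ι A (0 : V)) ∈ _
      rw [map_zero, map_zero]; exact Submodule.zero_mem _
    · intro x y _ _ hx hy
      show f (ι A (x + y)) ∈ _
      rw [map_add, map_add]; exact Submodule.add_mem _ hx hy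
    · intro a x _ hx
      show f (ι A (a • x)) ∈ _
      rw [map_smul, map_smul]; exact Submodule.smul_mem _ _ hx
  | mul a b ha hb =>
    rw [map_mul]
    refine Submodule.span_induction (p := fun x _ =>
        x * f b ∈ Submodule.span A (sortedSet e f)) ?_ ?_ ?_ ?_ ha
    · rintro x ⟨m, hm, rfl⟩
      exact mulMon_mem e f c hcomm m (f b) hb
    · show (0 : B) * f b ∈ _
      rw [zero_mul]; exact Submodule.zero_mem _
    · intro x y _ _ hx hy
      show (x + y) * f b ∈ _
      rw [add_mul]; exact Submodule.add_mem _ hx hy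
    · intro r x _ hx
      show (r • x) * f b ∈ _
      rw [smul_mul_assoc]; exact Submodule.smul_mem _ _ hx
  | add a b ha hb =>
    rw [map_add]; exact Submodule.add_mem _ ha hb

lemma getLast_le_of_sorted :
    ∀ (l : List (Fin (2 * ν))) (h : l ≠ []), List.Pairwise (fun a b => b ≤ a) l →
      ∀ i ∈ l, l.getLast h ≤ i := by
  intro l
  induction l with
  | nil => intro h; exact absurd rfl h
  | cons j t IH =>
    intro _ hsort i hi
    have htj : ∀ k ∈ t, k ≤ j := (List.pairwise_cons.mp hsort).1
    have ht : List.Pairwise (fun a b => b ≤ a) t := (List.pairwise_cons.mp hsort).2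
    match t with
    | [] =>
      rcases List.mem_singleton.mp hi with rfl
      exact le_refl _
    | k :: t' =>
      rw [List.getLast_cons (by simp : (k :: t') ≠ [])]
      rcases List.mem_cons.mp hi with rfl | hi
      · exact le_trans (htj _ (List.getLast_mem _)) (le_refl i)
      · exact IH (by simp) ht i hi

/-- Abstract PBW ideal identification. -/
theorem pbw_ideal (eb : Module.Basis (Fin (2 * ν)) A V) (f : TensorAlgebra A V →ₐ[A] B)
    (c : V → V → A)
    (hcomm : ∀ x y : V, f (ι A x * ι A y) = f (ι A y * ι A x) + algebraMap A B (c x y))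
    (hc : ∀ i j : Fin (2 * ν), (i : ℕ) < ν → (j : ℕ) < ν → c (eb i) (eb j) = 0)
    (hsurj : Function.Surjective f)
    (L : Submodule A V)
    (hLdef : L = Submodule.span A (eb '' {i : Fin (2 * ν) | (i : ℕ) < ν})) :
    Submodule.span A {w : B | ∃ a : B, ∃ x ∈ L, w = a * f (TensorAlgebra.ι A x)} =
      Submodule.map f.toLinearMap (orderedMonSpanOne A V (eb : Fin (2 * ν) → V)) := by
  set RHS := Submodule.map f.toLinearMap (orderedMonSpanOne A V (eb : Fin (2 * ν) → V))
  apply le_antisymm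
  · rw [Submodule.span_le]
    rintro w ⟨a, x, hxL, rfl⟩
    obtain ⟨t, rfl⟩ := hsurj a
    have ha : f t ∈ Submodule.span A (sortedSet (eb : Fin (2 * ν) → V) f) :=
      top_span (eb : Fin (2 * ν) → V) f c hcomm eb.span_eq t
    refine Submodule.span_induction (p := fun y _ => y * f (TensorAlgebra.ι A x) ∈ RHS)
      ?_ ?_ ?_ ?_ ha
    · rintro y ⟨m, hm, rfl⟩
      -- reduce to x a basis vector via span induction on L
      rw [hLdef] at hxL
      refine Submodule.span_induction (p := fun x _ =>
          f (tensorMon A V (eb : Fin (2 * ν) → V) m) * f (TensorAlgebra.ι A x) ∈ RHS)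
        ?_ ?_ ?_ ?_ hxL
      · rintro _ ⟨i, hi, rfl⟩
        rw [← map_mul, insertR (eb : Fin (2 * ν) → V) f c hcomm hc m hm i hi]
        refine Submodule.mem_map_of_mem (Submodule.subset_span ?_)
        refine ⟨List.orderedInsert (fun a b => b ≤ a) i m, ?_, ⟨i, ?_, hi⟩, rfl⟩
        · exact List.Pairwise.orderedInsert i m hm
        · exact (List.mem_orderedInsert _).mpr (Or.inl rfl)
      · show f _ * f (TensorAlgebra.ι A (0 : V)) ∈ RHS
        rw [map_zero, map_zero, mul_zero]; exact Submodule.zero_mem _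
      · intro x y _ _ hx hy
        show f _ * f (TensorAlgebra.ι A (x + y)) ∈ RHS
        rw [map_add, map_add, mul_add]; exact Submodule.add_mem _ hx hy
      · intro r x _ hx
        show f _ * f (TensorAlgebra.ι A (r • x)) ∈ RHS
        rw [map_smul, map_smul, mul_smul_comm]; exact Submodule.smul_mem _ _ hx
    · show (0 : B) * f (TensorAlgebra.ι A x) ∈ RHS
      rw [zero_mul]; exact Submodule.zero_mem _
    · intro y z _ _ hy hz
      show (y + z) * f (TensorAlgebra.ι A x) ∈ RHS
      rw [add_mul]; exact Submodule.add_mem _ hy hz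
    · intro r y _ hy
      show (r • y) * f (TensorAlgebra.ι A x) ∈ RHS
      rw [smul_mul_assoc]; exact Submodule.smul_mem _ _ hy
  · show Submodule.map f.toLinearMap (Submodule.span A
        {z | ∃ l : List (Fin (2 * ν)), List.Pairwise (fun a b => b ≤ a) l ∧
          (∃ i ∈ l, (i : ℕ) < ν) ∧ z = tensorMon A V (eb : Fin (2 * ν) → V) l}) ≤ _
    rw [Submodule.map_span, Submodule.span_le]
    rintro _ ⟨z, ⟨l, hsort, ⟨i, hil, hiν⟩, rfl⟩, rfl⟩
    have hne : l ≠ [] := List.ne_nil_of_mem hil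
    have hlast : (l.getLast hne : ℕ) < ν :=
      lt_of_le_of_lt (Fin.le_def.mp (getLast_le_of_sorted l hne hsort i hil)) hiν
    have hdecomp : l = l.dropLast ++ [l.getLast hne] := (List.dropLast_append_getLast hne).symm
    refine Submodule.subset_span ⟨f (tensorMon A V (eb : Fin (2 * ν) → V) l.dropLast),
      eb (l.getLast hne), ?_, ?_⟩
    · rw [hLdef]
      exact Submodule.subset_span ⟨l.getLast hne, hlast, rfl⟩
    · show f.toLinearMap (tensorMon A V _ l) = _
      conv_lhs => rw [hdecomp]
      rw [AlgHom.toLinearMap_apply, tensorMon_append, map_mul, tensorMon_cons, tensorMon_nil,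
        mul_one]

end PBWAux
/-- the PBW isomorphism identifies the left ideal `I_L` of the Weyl
algebra generated by the Lagrangian `L` with the ideal `I_S^{(L)}` of the symmetric
algebra generated by `L`: both are the images of `S̃₁(V)` under `μ_W` and `μ_S`
respectively. -/

theorem lagrangian_left_ideal_pbw
    (A V : Type*) [CommRing A] [AddCommGroup V] [Module A V]
    (ν : ℕ) (e : Module.Basis (Fin (2 * ν)) A V)
    (ω : V →ₗ[A] V →ₗ[A] A) (lam : A)
    (halt : ∀ x : V, ω x x = 0)
    (hnondeg : ∀ x : V, (∀ y : V, ω x y = 0) → x = 0)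
    (hL : ∀ i j : Fin (2 * ν), (i : ℕ) < ν → (j : ℕ) < ν → ω (e i) (e j) = 0)
    (hL' : ∀ i j : Fin (2 * ν), ν ≤ (i : ℕ) → ν ≤ (j : ℕ) → ω (e i) (e j) = 0)
    (L : Submodule A V)
    (hLdef : L = Submodule.span A (e '' {i : Fin (2 * ν) | (i : ℕ) < ν})) :
    (Submodule.span A
        {w : WeylAlgebra A V ω lam | ∃ a : WeylAlgebra A V ω lam, ∃ x ∈ L,
          w = a * muW A V ω lam (TensorAlgebra.ι A x)} =
      Submodule.map (muW A V ω lam) (orderedMonSpanOne A V (e : Fin (2 * ν) → V))) ∧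
    (Submodule.span A
        {s : SymCAlg A V | ∃ p : SymCAlg A V, ∃ x ∈ L,
          s = p * muS A V (TensorAlgebra.ι A x)} =
      Submodule.map (muS A V) (orderedMonSpanOne A V (e : Fin (2 * ν) → V))) := by
  constructor
  · -- Weyl algebra case
    let f : TensorAlgebra A V →ₐ[A] WeylAlgebra A V ω lam :=
      RingQuot.mkAlgHom A (weylRel A V ω lam)
    have hcomm : ∀ x y : V,
        f (TensorAlgebra.ι A x * TensorAlgebra.ι A y) =
          f (TensorAlgebra.ι A y * TensorAlgebra.ι A x) +
            algebraMap A (WeylAlgebra A V ω lam) (lam * ω x y) := by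
      intro x y
      have h : f (TensorAlgebra.ι A x * TensorAlgebra.ι A y -
            TensorAlgebra.ι A y * TensorAlgebra.ι A x) =
          f (algebraMap A (TensorAlgebra A V) (lam * ω x y)) :=
        RingQuot.mkAlgHom_rel A ⟨x, y, rfl, rfl⟩
      rw [map_sub, AlgHom.commutes] at h
      rw [sub_eq_iff_eq_add.mp h, add_comm]
    have hc : ∀ i j : Fin (2 * ν), (i : ℕ) < ν → (j : ℕ) < ν →
        (fun x y : V => lam * ω x y) (e i) (e j) = 0 := by
      intro i j hi hj; simp only [hL i j hi hj, mul_zero]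
    have hsurj : Function.Surjective f :=
      RingQuot.mkAlgHom_surjective A (weylRel A V ω lam)
    exact PBWAux.pbw_ideal e f (fun x y : V => lam * ω x y) hcomm hc hsurj L hLdef
  · -- symmetric algebra case
    let f : TensorAlgebra A V →ₐ[A] SymCAlg A V := RingQuot.mkAlgHom A (symCRel A V)
    have hcomm : ∀ x y : V,
        f (TensorAlgebra.ι A x * TensorAlgebra.ι A y) =
          f (TensorAlgebra.ι A y * TensorAlgebra.ι A x) +
            algebraMap A (SymCAlg A V) ((fun _ _ : V => (0 : A)) x y) := by
      intro x y
      have h : f (TensorAlgebra.ι A x * TensorAlgebra.ι A y) =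
          f (TensorAlgebra.ι A y * TensorAlgebra.ι A x) :=
        RingQuot.mkAlgHom_rel A ⟨x, y, rfl, rfl⟩
      rw [h, map_zero, add_zero]
    have hc : ∀ i j : Fin (2 * ν), (i : ℕ) < ν → (j : ℕ) < ν →
        (fun _ _ : V => (0 : A)) (e i) (e j) = 0 := fun _ _ _ _ => rfl
    have hsurj : Function.Surjective f :=
      RingQuot.mkAlgHom_surjective A (symCRel A V)
    exact PBWAux.pbw_ideal e f (fun _ _ : V => (0 : A)) hcomm hc hsurj L hLdef
end

section
/- Let V be a free A-module with basis e_1,...,e_{2ν} and dual basis ẽ¹,...,ẽ^{2ν} of V*, and let L = span(e_1,...,e_ν). Let I_Λ ⊆ Λ(V*) be the ideal generated by ẽ^{ν+1},...,ẽ^{2ν}. Suppose a ∈ W ⊗ Λⁿ(V*) (W any A-module) satisfies: a(x₁,...,x_n) ∈ U for all x₁,...,x_n ∈ L, where U ⊆ W is a submodule. Then a ∈ U ⊗ Λ(V*) + W ⊗ I_Λ. -/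
/-- Lemma 2: let `V` be free with basis `e_1, ..., e_{2ν}`, let
`L = span(e_1, ..., e_ν)`, and regard elements of `W ⊗ Λⁿ(V*)` as alternating
`n`-multilinear maps `Vⁿ → W`.  If `a` takes values in a submodule `U ⊆ W` whenever all
its arguments lie in `L`, then `a` decomposes as `a = b + c` where `b ∈ U ⊗ Λ(V*)`
(an alternating map with all values in `U`) and `c ∈ W ⊗ I_Λ` (an alternating map
annihilating `L`, i.e. vanishing whenever all arguments lie in `L`). -/
theorem valued_form_decomposition
    (A V W : Type*) [CommRing A] [AddCommGroup V] [Module A V]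
    [AddCommGroup W] [Module A W]
    (ν : ℕ) (e : Module.Basis (Fin (2 * ν)) A V)
    (L : Submodule A V)
    (hLdef : L = Submodule.span A (e '' {i : Fin (2 * ν) | (i : ℕ) < ν}))
    (U : Submodule A W) (n : ℕ)
    (a : V [⋀^Fin n]→ₗ[A] W)
    (ha : ∀ x : Fin n → V, (∀ i, x i ∈ L) → a x ∈ U) :
    ∃ b c : V [⋀^Fin n]→ₗ[A] W,
      a = b + c ∧
      (∀ x : Fin n → V, b x ∈ U) ∧
      (∀ x : Fin n → V, (∀ i, x i ∈ L) → c x = 0) := by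
  classical
  -- projection onto L along the complementary basis vectors
  set P : V →ₗ[A] V := Module.Basis.constr e A (fun i => if (i : ℕ) < ν then e i else 0) with hP
  have hPL : ∀ x : V, P x ∈ L := by
    intro x
    rw [hP, Module.Basis.constr_apply_fintype, hLdef]
    refine Submodule.sum_mem _ (fun i _ => Submodule.smul_mem _ _ ?_)
    by_cases h : (i : ℕ) < ν
    · simp only [h, if_true]
      exact Submodule.subset_span ⟨i, h, rfl⟩
    · simp [h]
  have hPfix : ∀ x ∈ L, P x = x := by
    intro x hx
    rw [hLdef] at hx
    induction hx using Submodule.span_induction with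
    | mem y hy =>
      obtain ⟨i, hi, rfl⟩ := hy
      rw [hP, Module.Basis.constr_basis, if_pos (show (i:ℕ) < ν from hi)]
    | zero => simp
    | add y z _ _ hy hz => simp [map_add, hy, hz]
    | smul r y _ hy => simp [map_smul, hy]
  refine ⟨a.compLinearMap P, a - a.compLinearMap P, by abel, ?_, ?_⟩
  · intro x
    exact ha (fun i => P (x i)) (fun i => hPL (x i))
  · intro x hx
    have : (fun i => P (x i)) = x := funext fun i => hPfix (x i) (hx i)
    simp [AlternatingMap.sub_apply, AlternatingMap.compLinearMap_apply, this]
end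

section
/- Let (V, ω) be a symplectic vector space with Lagrangian splitting V = L ⊕ L'. Consider the change of basis e'_i = A_i^j e_j where the matrix A is block-diagonal with respect to the splitting (A_α^β = A_β^α = 0 for α ≤ ν < β, i.e., A preserves both L and L'). Then the PBW isomorphism σ : W(V) → S(V) (defined via ordered monomials S̃(V)) is independent of the choice of adapted basis: the isomorphism constructed from {e'_i} equals the one constructed from {e_i}. -/
/-! ### Auxiliary development for the proof -/

namespace PBWProof

open MvPolynomial

section Comm

variable (A V : Type*) [CommRing A] [AddCommGroup V] [Module A V]

private theorem mk_ι_comm (x : V) (b : TensorAlgebra A V) :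
    RingQuot.mkAlgHom A (symCRel A V) (TensorAlgebra.ι A x) *
      RingQuot.mkAlgHom A (symCRel A V) b
    = RingQuot.mkAlgHom A (symCRel A V) b *
      RingQuot.mkAlgHom A (symCRel A V) (TensorAlgebra.ι A x) := by
  induction b using TensorAlgebra.induction with
  | algebraMap r => rw [AlgHom.commutes]; exact (Algebra.commutes r _).symm
  | ι y =>
      have h := RingQuot.mkAlgHom_rel A
        (show symCRel A V (TensorAlgebra.ι A x * TensorAlgebra.ι A y)
            (TensorAlgebra.ι A y * TensorAlgebra.ι A x) from ⟨x, y, rfl, rfl⟩)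
      rw [map_mul, map_mul] at h
      exact h
  | add a b ha hb => rw [map_add, mul_add, add_mul, ha, hb]
  | mul a b ha hb => rw [map_mul, ← mul_assoc, ha, mul_assoc, hb, mul_assoc]

private theorem mk_comm (a b : TensorAlgebra A V) :
    RingQuot.mkAlgHom A (symCRel A V) a * RingQuot.mkAlgHom A (symCRel A V) b
    = RingQuot.mkAlgHom A (symCRel A V) b * RingQuot.mkAlgHom A (symCRel A V) a := by
  induction a using TensorAlgebra.induction with
  | algebraMap r => rw [AlgHom.commutes]; exact Algebra.commutes r _
  | ι x => exact mk_ι_comm A V x b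
  | add a c ha hc => rw [map_add, add_mul, mul_add, ha, hc]
  | mul a c ha hc => rw [map_mul, mul_assoc, hc, ← mul_assoc, ha, mul_assoc]

noncomputable instance instCommRingSymCAlg : CommRing (SymCAlg A V) :=
  { (inferInstance : Ring (SymCAlg A V)) with
    mul_comm := fun x y => by
      obtain ⟨a, rfl⟩ := RingQuot.mkAlgHom_surjective A (symCRel A V) x
      obtain ⟨b, rfl⟩ := RingQuot.mkAlgHom_surjective A (symCRel A V) y
      exact mk_comm A V a b }

end Comm

section Main

variable {A V : Type*} [CommRing A] [AddCommGroup V] [Module A V]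
variable {ν : ℕ} (e : Module.Basis (Fin (2 * ν)) A V) (ω : V →ₗ[A] V →ₗ[A] A) (lam : A)

/-- The linear polynomial associated to a vector. -/
noncomputable def Pm : V →ₗ[A] MvPolynomial (Fin (2 * ν)) A :=
  ∑ i, (LinearMap.toSpanSingleton A (MvPolynomial (Fin (2 * ν)) A) (X i)).comp
    (e.coord i)

theorem Pm_apply (v : V) :
    Pm e v = ∑ i, e.repr v i • (X i : MvPolynomial (Fin (2 * ν)) A) := by
  simp [Pm, LinearMap.sum_apply, LinearMap.toSpanSingleton_apply, Module.Basis.coord_apply]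

/-- The derivation on the polynomial algebra associated to a vector,
differentiating only in the `L'`-directions, as a linear map in the vector. -/
noncomputable def DdL :
    V →ₗ[A] Derivation A (MvPolynomial (Fin (2 * ν)) A) (MvPolynomial (Fin (2 * ν)) A) :=
  (MvPolynomial.mkDerivationEquiv A).toLinearMap.comp
    (LinearMap.pi fun j : Fin (2 * ν) =>
      if ν ≤ (j : ℕ) then
        (Algebra.linearMap A (MvPolynomial (Fin (2 * ν)) A)).comp (ω.flip (e j))
      else 0)

theorem DdL_X (v : V) (j : Fin (2 * ν)) :
    DdL e ω v (X j) = if ν ≤ (j : ℕ) then C (ω v (e j)) else 0 := by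
  have h0 : DdL e ω v = MvPolynomial.mkDerivation A
      ((LinearMap.pi fun j : Fin (2 * ν) =>
        if ν ≤ (j : ℕ) then
          (Algebra.linearMap A (MvPolynomial (Fin (2 * ν)) A)).comp (ω.flip (e j))
        else 0) v) := rfl
  rw [h0, MvPolynomial.mkDerivation_X, LinearMap.pi_apply]
  rw [apply_ite (fun (f : V →ₗ[A] MvPolynomial (Fin (2 * ν)) A) => f v)]
  simp [Algebra.linearMap_apply, MvPolynomial.algebraMap_eq]

theorem skew (halt : ∀ x : V, ω x x = 0) (x y : V) : ω y x = -ω x y := by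
  have h := halt (x + y)
  simp only [map_add, LinearMap.add_apply, halt] at h
  linear_combination h

theorem Bsum (halt : ∀ x : V, ω x x = 0)
    (hL : ∀ i j : Fin (2 * ν), (i : ℕ) < ν → (j : ℕ) < ν → ω (e i) (e j) = 0)
    (hL' : ∀ i j : Fin (2 * ν), ν ≤ (i : ℕ) → ν ≤ (j : ℕ) → ω (e i) (e j) = 0)
    (x y : V) :
    ∑ j ∈ Finset.univ.filter (fun j : Fin (2 * ν) => ν ≤ (j : ℕ)),
      (ω x (e j) * e.repr y j - e.repr x j * ω y (e j)) = ω x y := by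
  have key : ((∑ j ∈ Finset.univ.filter (fun j : Fin (2 * ν) => ν ≤ (j : ℕ)),
        ((ω.flip (e j)).smulRight (e.coord j)))
      - ∑ j ∈ Finset.univ.filter (fun j : Fin (2 * ν) => ν ≤ (j : ℕ)),
        ((e.coord j).smulRight (ω.flip (e j)))) = ω := by
    refine e.ext fun a => e.ext fun b => ?_
    simp only [LinearMap.sub_apply, LinearMap.sum_apply, LinearMap.smulRight_apply,
      LinearMap.flip_apply, Module.Basis.coord_apply, Module.Basis.repr_self, LinearMap.smul_apply,
      Finsupp.single_apply, smul_eq_mul, mul_ite, mul_one, mul_zero, ite_mul, one_mul,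
      zero_mul, Finset.sum_ite_eq, Finset.mem_filter, Finset.mem_univ, true_and]
    by_cases ha : ν ≤ (a : ℕ) <;> by_cases hb : ν ≤ (b : ℕ) <;> simp [ha, hb]
    · exact hL' b a hb ha
    · rw [skew ω halt (e a) (e b), neg_neg]
    · exact (hL a b (lt_of_not_ge ha) (lt_of_not_ge hb)).symm
  have h2 := DFunLike.congr_fun (DFunLike.congr_fun key x) y
  simpa only [LinearMap.sub_apply, LinearMap.sum_apply, LinearMap.smulRight_apply,
    LinearMap.flip_apply, Module.Basis.coord_apply, LinearMap.smul_apply, smul_eq_mul,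
    Finset.sum_sub_distrib] using h2

theorem DdL_Pm (v w : V) :
    DdL e ω v (Pm e w)
      = C (∑ j ∈ Finset.univ.filter (fun j : Fin (2 * ν) => ν ≤ (j : ℕ)),
          ω v (e j) * e.repr w j) := by
  have h1 : DdL e ω v (Pm e w)
      = ∑ i : Fin (2 * ν), (if ν ≤ (i : ℕ) then C (ω v (e i) * e.repr w i) else 0) := by
    rw [Pm_apply, map_sum]
    refine Finset.sum_congr rfl fun i _ => ?_
    rw [Derivation.map_smul, DdL_X]
    split_ifs with h
    · rw [smul_eq_C_mul, ← C_mul]; exact congrArg C (mul_comm _ _)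
    · exact smul_zero _
  rw [h1, ← Finset.sum_filter, map_sum]

/-- `v` lies in the Lagrangian `L` (in terms of the basis `e`). -/
def inL (v : V) : Prop := ∀ j : Fin (2 * ν), ν ≤ (j : ℕ) → e.repr v j = 0

/-- `v` lies in the Lagrangian `L'` (in terms of the basis `e`). -/
def inL' (v : V) : Prop := ∀ j : Fin (2 * ν), (j : ℕ) < ν → e.repr v j = 0

theorem omega_inL'
    (hL' : ∀ i j : Fin (2 * ν), ν ≤ (i : ℕ) → ν ≤ (j : ℕ) → ω (e i) (e j) = 0)
    {x : V} (hx : inL' e x) {j : Fin (2 * ν)} (hj : ν ≤ (j : ℕ)) : ω x (e j) = 0 := by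
  have h1 : ω x (e j) = ∑ i, e.repr x i * ω (e i) (e j) := by
    conv_lhs => rw [← e.sum_repr x]
    rw [map_sum, LinearMap.sum_apply]
    simp [LinearMap.smul_apply, smul_eq_mul]
  rw [h1]
  refine Finset.sum_eq_zero fun i _ => ?_
  by_cases hi : ν ≤ (i : ℕ)
  · rw [hL' i j hi hj, mul_zero]
  · rw [hx i (lt_of_not_ge hi), zero_mul]

theorem DdL_Pm_inL (v : V) {w : V} (hw : inL e w) : DdL e ω v (Pm e w) = 0 := by
  rw [DdL_Pm]
  rw [show (∑ j ∈ Finset.univ.filter (fun j : Fin (2 * ν) => ν ≤ (j : ℕ)),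
      ω v (e j) * e.repr w j) = 0 from Finset.sum_eq_zero fun j hj => by
    rw [hw j (Finset.mem_filter.mp hj).2, mul_zero]]
  exact map_zero _

theorem DdL_Pm_inL'
    (hL' : ∀ i j : Fin (2 * ν), ν ≤ (i : ℕ) → ν ≤ (j : ℕ) → ω (e i) (e j) = 0)
    {x w : V} (hx : inL' e x) (hw : inL' e w) : DdL e ω x (Pm e w) = 0 := by
  rw [DdL_Pm]
  rw [show (∑ j ∈ Finset.univ.filter (fun j : Fin (2 * ν) => ν ≤ (j : ℕ)),
      ω x (e j) * e.repr w j) = 0 from Finset.sum_eq_zero fun j hj => by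
    rw [omega_inL' e ω hL' hx (Finset.mem_filter.mp hj).2, zero_mul]]
  exact map_zero _

theorem DdL_prod (x : V) (l : List V) (h : ∀ v ∈ l, DdL e ω x (Pm e v) = 0) :
    DdL e ω x ((l.map fun v => Pm e v).prod) = 0 := by
  induction l with
  | nil => simpa using (DdL e ω x).map_one_eq_zero
  | cons v t ih =>
      rw [List.map_cons, List.prod_cons, Derivation.leibniz,
        h v (List.mem_cons_self), ih (fun w hw => h w (List.mem_cons_of_mem _ hw)),
        smul_zero, smul_zero, add_zero]

/-- Bundling of `Derivation.toLinearMap`. -/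
noncomputable def derivLin :
    Derivation A (MvPolynomial (Fin (2 * ν)) A) (MvPolynomial (Fin (2 * ν)) A) →ₗ[A]
      (MvPolynomial (Fin (2 * ν)) A →ₗ[A] MvPolynomial (Fin (2 * ν)) A) where
  toFun D := D.toLinearMap
  map_add' _ _ := rfl
  map_smul' _ _ := rfl

/-- The Fock-type representation operator of a vector. -/
noncomputable def rho1 : V →ₗ[A] Module.End A (MvPolynomial (Fin (2 * ν)) A) :=
  (LinearMap.mul A (MvPolynomial (Fin (2 * ν)) A)).comp (Pm e)
    + lam • ((derivLin (A := A) (ν := ν)).comp (DdL e ω))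

theorem rho1_apply (v : V) (f : MvPolynomial (Fin (2 * ν)) A) :
    rho1 e ω lam v f = Pm e v * f + lam • DdL e ω v f := by
  simp [rho1, derivLin, LinearMap.mul_apply', LinearMap.add_apply, LinearMap.smul_apply]

theorem DdL_comm (x y : V) (f : MvPolynomial (Fin (2 * ν)) A) :
    DdL e ω x (DdL e ω y f) = DdL e ω y (DdL e ω x f) := by
  have h : (⁅DdL e ω x, DdL e ω y⁆ :
      Derivation A (MvPolynomial (Fin (2 * ν)) A) (MvPolynomial (Fin (2 * ν)) A)) = 0 := by
    apply MvPolynomial.derivation_ext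
    intro i
    rw [Derivation.commutator_apply, DdL_X, DdL_X]
    split_ifs with h1 <;> simp
  have h2 := DFunLike.congr_fun h f
  rw [Derivation.commutator_apply] at h2
  have h3 : (0 : Derivation A (MvPolynomial (Fin (2 * ν)) A)
      (MvPolynomial (Fin (2 * ν)) A)) f = 0 := rfl
  rw [h3] at h2
  exact sub_eq_zero.mp h2

theorem rho1_comm (halt : ∀ x : V, ω x x = 0)
    (hL : ∀ i j : Fin (2 * ν), (i : ℕ) < ν → (j : ℕ) < ν → ω (e i) (e j) = 0)
    (hL' : ∀ i j : Fin (2 * ν), ν ≤ (i : ℕ) → ν ≤ (j : ℕ) → ω (e i) (e j) = 0)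
    (x y : V) :
    rho1 e ω lam x * rho1 e ω lam y - rho1 e ω lam y * rho1 e ω lam x
      = algebraMap A (Module.End A (MvPolynomial (Fin (2 * ν)) A)) (lam * ω x y) := by
  apply LinearMap.ext; intro f
  have hxy : DdL e ω x (Pm e y) = DdL e ω y (Pm e x) + C (ω x y) := by
    rw [DdL_Pm, DdL_Pm, ← Bsum e ω halt hL hL' x y, ← map_add, ← Finset.sum_add_distrib]
    congr 1
    refine Finset.sum_congr rfl fun j _ => by ring
  rw [LinearMap.sub_apply, Module.End.mul_apply, Module.End.mul_apply,
    Module.algebraMap_end_apply]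
  simp only [rho1_apply]
  rw [map_add, map_add, Derivation.map_smul, Derivation.map_smul,
    Derivation.leibniz, Derivation.leibniz, hxy, DdL_comm e ω x y f]
  simp only [smul_eq_mul, smul_add, mul_add, add_mul, Algebra.smul_def,
    MvPolynomial.algebraMap_eq, map_mul]
  ring

/-- The representation of the Weyl algebra on the polynomial algebra. -/
noncomputable def rhoW (halt : ∀ x : V, ω x x = 0)
    (hL : ∀ i j : Fin (2 * ν), (i : ℕ) < ν → (j : ℕ) < ν → ω (e i) (e j) = 0)
    (hL' : ∀ i j : Fin (2 * ν), ν ≤ (i : ℕ) → ν ≤ (j : ℕ) → ω (e i) (e j) = 0) :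
    WeylAlgebra A V ω lam →ₐ[A] Module.End A (MvPolynomial (Fin (2 * ν)) A) :=
  RingQuot.liftAlgHom A ⟨TensorAlgebra.lift A (rho1 e ω lam), by
    rintro a b ⟨x, y, ha, hb⟩
    subst ha; subst hb
    rw [map_sub, map_mul, map_mul, TensorAlgebra.lift_ι_apply, TensorAlgebra.lift_ι_apply,
      AlgHom.commutes]
    exact rho1_comm e ω lam halt hL hL' x y⟩

theorem rhoW_mk (halt : ∀ x : V, ω x x = 0)
    (hL : ∀ i j : Fin (2 * ν), (i : ℕ) < ν → (j : ℕ) < ν → ω (e i) (e j) = 0)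
    (hL' : ∀ i j : Fin (2 * ν), ν ≤ (i : ℕ) → ν ≤ (j : ℕ) → ω (e i) (e j) = 0)
    (t : TensorAlgebra A V) :
    rhoW e ω lam halt hL hL' (RingQuot.mkAlgHom A (weylRel A V ω lam) t)
      = TensorAlgebra.lift A (rho1 e ω lam) t :=
  RingQuot.liftAlgHom_mkAlgHom_apply _ _ _ _

/-- Evaluation of polynomials in the symmetric algebra. -/
noncomputable def aev :
    MvPolynomial (Fin (2 * ν)) A →ₐ[A] SymCAlg A V :=
  aeval fun i => RingQuot.mkAlgHom A (symCRel A V) (TensorAlgebra.ι A (e i))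

theorem aev_Pm (v : V) :
    aev e (Pm e v) = RingQuot.mkAlgHom A (symCRel A V) (TensorAlgebra.ι A v) := by
  have h1 : RingQuot.mkAlgHom A (symCRel A V) (TensorAlgebra.ι A v)
      = ∑ i, e.repr v i • RingQuot.mkAlgHom A (symCRel A V) (TensorAlgebra.ι A (e i)) := by
    conv_lhs => rw [← e.sum_repr v]
    rw [map_sum, map_sum]
    exact Finset.sum_congr rfl fun i _ => by rw [map_smul, map_smul]
  rw [Pm_apply, map_sum, h1]
  refine Finset.sum_congr rfl fun i _ => ?_
  rw [map_smul]
  congr 1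
  exact aeval_X _ _

theorem rho_prod_L (lb : List V) (h : ∀ v ∈ lb, inL e v) :
    ((lb.map fun v => rho1 e ω lam v).prod) 1 = (lb.map fun v => Pm e v).prod := by
  induction lb with
  | nil => simp
  | cons v t ih =>
      rw [List.map_cons, List.prod_cons, Module.End.mul_apply,
        ih fun w hw => h w (List.mem_cons_of_mem _ hw), rho1_apply,
        DdL_prod e ω v _ fun w hw => DdL_Pm_inL e ω v (h w (List.mem_cons_of_mem _ hw)),
        smul_zero, add_zero, List.map_cons, List.prod_cons]

theorem rho_prod
    (hL' : ∀ i j : Fin (2 * ν), ν ≤ (i : ℕ) → ν ≤ (j : ℕ) → ω (e i) (e j) = 0)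
    (la lb : List V) (h1 : ∀ v ∈ la, inL' e v) (h2 : ∀ v ∈ lb, inL e v) :
    (((la ++ lb).map fun v => rho1 e ω lam v).prod) 1
      = ((la ++ lb).map fun v => Pm e v).prod := by
  induction la with
  | nil => simpa using rho_prod_L e ω lam lb h2
  | cons x t ih =>
      have hx : inL' e x := h1 x (List.mem_cons_self)
      have ht : ∀ v ∈ t, inL' e v := fun v hv => h1 v (List.mem_cons_of_mem _ hv)
      rw [List.cons_append, List.map_cons, List.prod_cons, Module.End.mul_apply, ih ht,
        rho1_apply]
      have hD : DdL e ω x (((t ++ lb).map fun v => Pm e v).prod) = 0 := by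
        refine DdL_prod e ω x _ fun w hw => ?_
        rcases List.mem_append.mp hw with hw | hw
        · exact DdL_Pm_inL' e ω hL' hx (ht w hw)
        · exact DdL_Pm_inL e ω x (h2 w hw)
      rw [hD, smul_zero, add_zero, List.map_cons, List.prod_cons]

/-- The comparison map `Φ : W(V) → S(V)`. -/
noncomputable def Phi (halt : ∀ x : V, ω x x = 0)
    (hL : ∀ i j : Fin (2 * ν), (i : ℕ) < ν → (j : ℕ) < ν → ω (e i) (e j) = 0)
    (hL' : ∀ i j : Fin (2 * ν), ν ≤ (i : ℕ) → ν ≤ (j : ℕ) → ω (e i) (e j) = 0) :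
    WeylAlgebra A V ω lam → SymCAlg A V :=
  fun w => aev e ((rhoW e ω lam halt hL hL' w) 1)

theorem Phi_mon (halt : ∀ x : V, ω x x = 0)
    (hL : ∀ i j : Fin (2 * ν), (i : ℕ) < ν → (j : ℕ) < ν → ω (e i) (e j) = 0)
    (hL' : ∀ i j : Fin (2 * ν), ν ≤ (i : ℕ) → ν ≤ (j : ℕ) → ω (e i) (e j) = 0)
    (la lb : List V) (h1 : ∀ v ∈ la, inL' e v) (h2 : ∀ v ∈ lb, inL e v) :
    Phi e ω lam halt hL hL'
        (muW A V ω lam (((la ++ lb).map fun v => TensorAlgebra.ι A v).prod))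
      = muS A V (((la ++ lb).map fun v => TensorAlgebra.ι A v).prod) := by
  have hmuW : muW A V ω lam (((la ++ lb).map fun v => TensorAlgebra.ι A v).prod)
      = RingQuot.mkAlgHom A (weylRel A V ω lam)
          (((la ++ lb).map fun v => TensorAlgebra.ι A v).prod) := rfl
  have hmuS : muS A V (((la ++ lb).map fun v => TensorAlgebra.ι A v).prod)
      = RingQuot.mkAlgHom A (symCRel A V)
          (((la ++ lb).map fun v => TensorAlgebra.ι A v).prod) := rfl
  show aev e _ = _
  rw [hmuW, hmuS, rhoW_mk, map_list_prod, List.map_map]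
  have hcomp : ((TensorAlgebra.lift A (rho1 e ω lam)) ∘ fun v => TensorAlgebra.ι A v)
      = fun v => rho1 e ω lam v := funext fun v => TensorAlgebra.lift_ι_apply _ _
  rw [hcomp, rho_prod e ω lam hL' la lb h1 h2, map_list_prod, List.map_map,
    map_list_prod, List.map_map]
  refine congrArg List.prod ?_
  have : ((aev e : MvPolynomial (Fin (2 * ν)) A → SymCAlg A V) ∘ fun v => Pm e v)
      = ((RingQuot.mkAlgHom A (symCRel A V) : TensorAlgebra A V → SymCAlg A V)
          ∘ fun v => TensorAlgebra.ι A v) := funext fun v => aev_Pm e v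
  rw [this]; rfl

theorem dropWhile_lt (l : List (Fin (2 * ν)))
    (hl : List.Pairwise (fun a b => b ≤ a) l) :
    ∀ i ∈ l.dropWhile (fun i : Fin (2 * ν) => decide (ν ≤ (i : ℕ))), (i : ℕ) < ν := by
  induction l with
  | nil => intro i hi; simp at hi
  | cons a t ih =>
      rw [List.pairwise_cons] at hl
      intro i hi
      rw [List.dropWhile_cons] at hi
      by_cases ha : ν ≤ (a : ℕ)
      · rw [if_pos (by simp [ha])] at hi
        exact ih hl.2 i hi
      · rw [if_neg (by simp [ha])] at hi
        rcases List.mem_cons.mp hi with rfl | hi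
        · exact lt_of_not_ge ha
        · have h3 : i ≤ a := hl.1 i hi
          have h4 : (i : ℕ) ≤ (a : ℕ) := h3
          omega

theorem Phi_good (halt : ∀ x : V, ω x x = 0)
    (hL : ∀ i j : Fin (2 * ν), (i : ℕ) < ν → (j : ℕ) < ν → ω (e i) (e j) = 0)
    (hL' : ∀ i j : Fin (2 * ν), ν ≤ (i : ℕ) → ν ≤ (j : ℕ) → ω (e i) (e j) = 0)
    (f : Fin (2 * ν) → V)
    (hfL : ∀ i : Fin (2 * ν), (i : ℕ) < ν → inL e (f i))
    (hfL' : ∀ i : Fin (2 * ν), ν ≤ (i : ℕ) → inL' e (f i)) :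
    ∀ b ∈ orderedMonSpan A V f,
      Phi e ω lam halt hL hL' (muW A V ω lam b) = muS A V b := by
  intro b hb
  induction hb using Submodule.span_induction with
  | mem z hz =>
      obtain ⟨l, hsort, rfl⟩ := hz
      have hsplit := List.takeWhile_append_dropWhile
        (p := fun i : Fin (2 * ν) => decide (ν ≤ (i : ℕ))) (l := l)
      set l1 := l.takeWhile (fun i : Fin (2 * ν) => decide (ν ≤ (i : ℕ))) with hl1
      set l2 := l.dropWhile (fun i : Fin (2 * ν) => decide (ν ≤ (i : ℕ))) with hl2
      have hmon : tensorMon A V f l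
          = (((l1.map f) ++ (l2.map f)).map fun v => TensorAlgebra.ι A v).prod := by
        rw [← List.map_append, ← hsplit, List.map_map]
        rfl
      rw [hmon]
      refine Phi_mon e ω lam halt hL hL' (l1.map f) (l2.map f) ?_ ?_
      · intro v hv
        obtain ⟨i, hi, rfl⟩ := List.mem_map.mp hv
        exact hfL' i (by simpa using List.mem_takeWhile_imp hi)
      · intro v hv
        obtain ⟨i, hi, rfl⟩ := List.mem_map.mp hv
        exact hfL i (dropWhile_lt l hsort i hi)
  | zero =>
      show Phi e ω lam halt hL hL' (muW A V ω lam 0) = muS A V 0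
      rw [map_zero, map_zero]
      show aev e ((rhoW e ω lam halt hL hL' 0) 1) = 0
      rw [map_zero, LinearMap.zero_apply, map_zero]
  | add u w hu hw ihu ihw =>
      show Phi e ω lam halt hL hL' (muW A V ω lam (u + w)) = muS A V (u + w)
      rw [map_add, map_add]
      show aev e ((rhoW e ω lam halt hL hL' _) 1) = _
      rw [map_add, LinearMap.add_apply, map_add]
      exact congrArg₂ (· + ·) ihu ihw
  | smul c u hu ihu =>
      show Phi e ω lam halt hL hL' (muW A V ω lam (c • u)) = muS A V (c • u)
      rw [map_smul, map_smul]
      show aev e ((rhoW e ω lam halt hL hL' _) 1) = _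
      rw [map_smul, LinearMap.smul_apply, map_smul]
      exact congrArg (c • ·) ihu

end Main

end PBWProof
/-- the PBW isomorphism `σ : W(V) → S(V)` does not depend on the choice of
basis adapted to the Lagrangian splitting `V = L ⊕ L'`.  Concretely: if `e` and `e'` are
two bases related by a block-diagonal change of basis (each of `e`, `e'` has its first
`ν` vectors spanning the Lagrangian `L` and its last `ν` vectors spanning the Lagrangian
`L'`), then whenever ordered monomial combinations `a ∈ S̃(V)` (for `e`) and
`a' ∈ S̃'(V)` (for `e'`) have the same image in `W(V)`, they also have the same image in
`S(V)`; i.e. the isomorphisms `μ_S ι₁ (μ_W ι₁)⁻¹` constructed from `e` and `e'`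
coincide. -/
theorem pbw_isomorphism_basis_independent
    (A V : Type*) [CommRing A] [AddCommGroup V] [Module A V]
    (ν : ℕ) (e e' : Module.Basis (Fin (2 * ν)) A V)
    (ω : V →ₗ[A] V →ₗ[A] A) (lam : A)
    (halt : ∀ x : V, ω x x = 0)
    (hnondeg : ∀ x : V, (∀ y : V, ω x y = 0) → x = 0)
    (hL : ∀ i j : Fin (2 * ν), (i : ℕ) < ν → (j : ℕ) < ν → ω (e i) (e j) = 0)
    (hL' : ∀ i j : Fin (2 * ν), ν ≤ (i : ℕ) → ν ≤ (j : ℕ) → ω (e i) (e j) = 0)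
    (hblock : ∀ i j : Fin (2 * ν),
      (((i : ℕ) < ν ∧ ν ≤ (j : ℕ)) ∨ ((j : ℕ) < ν ∧ ν ≤ (i : ℕ))) →
        e.repr (e' i) j = 0) :
    ∀ a ∈ orderedMonSpan A V (e : Fin (2 * ν) → V),
      ∀ a' ∈ orderedMonSpan A V (e' : Fin (2 * ν) → V),
        muW A V ω lam a = muW A V ω lam a' → muS A V a = muS A V a' := by
  intro a ha a' ha' heq
  have hfL1 : ∀ i : Fin (2 * ν), (i : ℕ) < ν → PBWProof.inL e (e i) := by
    intro i hi j hj
    rw [Module.Basis.repr_self, Finsupp.single_apply, if_neg]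
    rintro rfl; omega
  have hfL1' : ∀ i : Fin (2 * ν), ν ≤ (i : ℕ) → PBWProof.inL' e (e i) := by
    intro i hi j hj
    rw [Module.Basis.repr_self, Finsupp.single_apply, if_neg]
    rintro rfl; omega
  have hfL2 : ∀ i : Fin (2 * ν), (i : ℕ) < ν → PBWProof.inL e (e' i) :=
    fun i hi j hj => hblock i j (Or.inl ⟨hi, hj⟩)
  have hfL2' : ∀ i : Fin (2 * ν), ν ≤ (i : ℕ) → PBWProof.inL' e (e' i) :=
    fun i hi j hj => hblock i j (Or.inr ⟨hj, hi⟩)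
  have g1 := PBWProof.Phi_good e ω lam halt hL hL' (⇑e) hfL1 hfL1' a ha
  have g2 := PBWProof.Phi_good e ω lam halt hL hL' (⇑e') hfL2 hfL2' a' ha'
  rw [← g1, ← g2, heq]
end
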